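/- arXiv:1205.2331 — 4 statements merged into one kernel-verified Lean document; each statement's English description precedes it below -/
import Mathlib

section
/- There exists a unique family {s_λ} of elements of Sym, indexed by partitions, with s_∅ = 1, satisfying the Pieri rule: for every i ≥ 1 and every partition λ, h_i · s_λ = Σ_μ s_μ, where the sum is over all partitions μ ⊇ λ such that μ/λ is a horizontal strip of size i. Moreover, this family is a ℚ-basis of Sym. -/
/-! ## Partitions -/

/-- A partition: a weakly decreasing finite list of positive integers. -/
abbrev Ptn : Type := {l : List ℕ+ // l.Pairwise (· ≥ ·)}

/-- The `i`-th part (0-indexed) of a list of positive integers, `0` past the end. -/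
def pget (l : List ℕ+) (i : ℕ) : ℕ := (l.map fun p => (p : ℕ)).getD i 0

/-- The size `|l|` of a list of positive integers: the sum of its parts. -/
def psum (l : List ℕ+) : ℕ := (l.map fun p => (p : ℕ)).sum

/-- The empty partition. -/
def emptyPtn : Ptn := ⟨[], List.Pairwise.nil⟩

/-- Containment of partitions: `μ ⊆ λ` iff `μᵢ ≤ λᵢ` for all `i`. -/
def PtnSub (μ lam : Ptn) : Prop := ∀ i, pget μ.1 i ≤ pget lam.1 i

/-- `λ/μ` is a horizontal strip of size `i`: `μ ⊆ λ`, no two cells of `λ/μ` in the same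
column (equivalently `λ_{i+1} ≤ μ_i` for all `i`), and `|λ| = |μ| + i`. -/
def HStrip (μ lam : Ptn) (i : ℕ) : Prop :=
  PtnSub μ lam ∧ (∀ n, pget lam.1 (n + 1) ≤ pget μ.1 n) ∧ psum lam.1 = psum μ.1 + i

/-- The Kostka number `K_{λ,μ}`: the number of chains
`∅ = ν⁰ ⊆ ν¹ ⊆ ⋯ ⊆ νᵐ = λ` of partitions in which each `νⁱ/νⁱ⁻¹` is a horizontal strip of
size `μᵢ` (semistandard tableaux of shape `λ` and content `μ`). -/
noncomputable def Knum (lam : Ptn) (μ : List ℕ+) : ℕ :=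
  Nat.card {ν : Fin (μ.length + 1) → Ptn //
    ν 0 = emptyPtn ∧ ν (Fin.last μ.length) = lam ∧
      ∀ i : Fin μ.length, HStrip (ν i.castSucc) (ν i.succ) ((μ.get i : ℕ))}

/-! ## SymA -/

/-- `SymA = ℚ[h₁, h₂, …]`, a polynomial algebra on countably many generators. -/
abbrev SymA : Type := MvPolynomial ℕ+ ℚ

/-- The generator `hᵢ` of `SymA`. -/
noncomputable def hGen (i : ℕ+) : SymA := MvPolynomial.X i

/-- `h_λ = h_{λ₁} ⋯ h_{λ_m}`. -/
noncomputable def hL (l : List ℕ+) : SymA := (l.map hGen).prod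

/-- A family `s : Ptn → SymA` with `s ∅ = 1` satisfying the Pieri rule:
`hᵢ • s_λ = Σ_μ s_μ`, the sum over partitions `μ ⊇ λ` with `μ/λ` a horizontal strip
of size `i` (for every `i ≥ 1`). -/
def PieriFamily (s : Ptn → SymA) : Prop :=
  s emptyPtn = 1 ∧
    ∀ (i : ℕ+) (lam : Ptn),
      hGen i * s lam = ∑ᶠ μ ∈ {μ : Ptn | HStrip lam μ (i : ℕ)}, s μ

/-! ## Power series: monomial (quasi-)symmetric functions -/

/-- The ambient algebra of formal power series in countably many commuting variables
`x₀, x₁, x₂, …` (we only use elements of bounded degree). -/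
abbrev PS : Type := MvPowerSeries ℕ ℚ

/-- The complete homogeneous symmetric power series of degree `i`: the sum of all
monomials of degree `i`. -/
def hPS (i : ℕ+) : PS := fun d => if (d.sum fun _ n => n) = (i : ℕ) then 1 else 0

/-- The realization `SymA → PS` sending each generator `hᵢ` to the complete homogeneous
symmetric function of degree `i`. -/
noncomputable def realize : SymA →ₐ[ℚ] PS := MvPolynomial.aeval hPS

/-- The monomial quasi-symmetric function `M_α = Σ_{i₁<⋯<i_m} x_{i₁}^{α₁} ⋯ x_{i_m}^{α_m}`. -/
def Mqs (α : List ℕ+) : PS :=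
  fun d => if (d.support.sort (· ≤ ·)).map (fun j => d j) = α.map (fun p => (p : ℕ))
    then 1 else 0

/-- The monomial symmetric function `m_λ = Σ_{α : λ(α) = λ} M_α`: the sum of all distinct
monomials whose exponent sequence rearranges to `λ`. -/
noncomputable def mPS (lam : Ptn) : PS := ∑ᶠ α ∈ {α : List ℕ+ | α.Perm lam.1}, Mqs α

/-! ## NSym and compositions -/

/-- `NSym`, the free associative algebra on noncommuting generators `H₁, H₂, …`. -/
abbrev NSym : Type := FreeAlgebra ℚ ℕ+

/-- The generator `Hᵢ` of `NSym`. -/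
def Hgen (i : ℕ+) : NSym := FreeAlgebra.ι ℚ i

/-- `H_α = H_{α₁} ⋯ H_{α_m}`. -/
def HL (α : List ℕ+) : NSym := (α.map Hgen).prod

/-- The covering relation of the composition poset: `α` is obtained from `β` either by
prepending a new part equal to `1`, or by replacing the leftmost part of `β` equal to `m`
by `m + 1`. -/
def CCover (β α : List ℕ+) : Prop :=
  α = 1 :: β ∨
    ∃ (m : ℕ+) (l₁ l₂ : List ℕ+), β = l₁ ++ m :: l₂ ∧ α = l₁ ++ (m + 1) :: l₂ ∧ m ∉ l₁

/-- The composition poset order `≤_C`, the reflexive-transitive closure of the covering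
relation. -/
def CLe : List ℕ+ → List ℕ+ → Prop := Relation.ReflTransGen CCover

/-- `(r, c)` is a cell of the skew diagram `α//β` (rows `r` and columns `c` `0`-indexed,
with the diagram of `β` placed in the lower-left corner of the diagram of `α`, i.e. row
`r ≥ ℓ(α) - ℓ(β)` of `α` is aligned with row `r - (ℓ(α) - ℓ(β))` of `β`). -/
def stripCell (β α : List ℕ+) (r c : ℕ) : Prop :=
  r < α.length ∧ c < pget α r ∧
    (r < α.length - β.length ∨ pget β (r - (α.length - β.length)) ≤ c)

/-- `α//β` is a horizontal composition strip of size `i`: `β ≤_C α`, `|α| = |β| + i`, and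
no two cells of `α//β` lie in the same column. -/
def HCStrip (β α : List ℕ+) (i : ℕ) : Prop :=
  CLe β α ∧ psum α = psum β + i ∧
    ∀ r s c, r ≠ s → stripCell β α r c → ¬ stripCell β α s c

/-- A family `S : compositions → NSym` with `S ∅ = 1` satisfying the noncommutative Pieri
rule: `Hᵢ • S_α = Σ_β S_β`, the sum over compositions `β ≥_C α` with `β//α` a horizontal
composition strip of size `i` (for every `i ≥ 1`). -/
def NCPieriFamily (S : List ℕ+ → NSym) : Prop :=
  S [] = 1 ∧
    ∀ (i : ℕ+) (α : List ℕ+),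
      Hgen i * S α = ∑ᶠ β ∈ {β : List ℕ+ | HCStrip α β (i : ℕ)}, S β

/-- `K̃_{α,β}`: the number of chains `∅ = γ⁰ ≤_C γ¹ ≤_C ⋯ ≤_C γᵐ = α` of compositions in
which each `γⁱ//γⁱ⁻¹` is a horizontal composition strip of size `βᵢ` (semistandard
composition tableaux of shape `α` and content `β`). -/
noncomputable def Ktilde (α β : List ℕ+) : ℕ :=
  Nat.card {γ : Fin (β.length + 1) → List ℕ+ //
    γ 0 = [] ∧ γ (Fin.last β.length) = α ∧
      ∀ i : Fin β.length, HCStrip (γ i.castSucc) (γ i.succ) ((β.get i : ℕ))}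

/-- The quasi-symmetric Schur function `QS_α = Σ_β K̃_{α,β} M_β`. -/
noncomputable def QSfun (α : List ℕ+) : PS := ∑ᶠ β : List ℕ+, Ktilde α β • Mqs β

/-- The forgetful map `χ : NSym → SymA`, the algebra homomorphism with `χ(Hᵢ) = hᵢ`. -/
noncomputable def chi : NSym →ₐ[ℚ] SymA := FreeAlgebra.lift ℚ hGen

/-! ## k-bounded objects -/

/-- A partition is `k`-bounded if all of its parts are at most `k`. -/
def kBddP (k : ℕ) (lam : Ptn) : Prop := ∀ p ∈ lam.1, (p : ℕ) ≤ k

/-- A composition is `k`-bounded if all of its parts are at most `k`. -/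
def kBddC (k : ℕ) (α : List ℕ+) : Prop := ∀ p ∈ α, (p : ℕ) ≤ k

namespace SchurAux

theorem pget_nil (i : ℕ) : pget [] i = 0 := rfl
theorem pget_cons_zero (a : ℕ+) (l : List ℕ+) : pget (a :: l) 0 = a := rfl
theorem pget_cons_succ (a : ℕ+) (l : List ℕ+) (i : ℕ) : pget (a :: l) (i + 1) = pget l i := rfl

theorem pget_eq_zero_iff {l : List ℕ+} {i : ℕ} : pget l i = 0 ↔ l.length ≤ i := by
  induction l generalizing i with
  | nil => simp [pget_nil]
  | cons a t ih =>
    cases i with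
    | zero => simp [pget_cons_zero]
    | succ i => simp [pget_cons_succ, ih]

theorem pget_pos_iff {l : List ℕ+} {i : ℕ} : 0 < pget l i ↔ i < l.length := by
  rw [Nat.pos_iff_ne_zero, ← not_le, not_iff_not]; exact pget_eq_zero_iff

theorem pget_succ_le {l : List ℕ+} (hl : l.Pairwise (· ≥ ·)) (i : ℕ) :
    pget l (i + 1) ≤ pget l i := by
  induction l generalizing i with
  | nil => simp [pget_nil]
  | cons a t ih =>
    rcases List.pairwise_cons.1 hl with ⟨ha, ht⟩
    cases i with
    | zero =>
      rw [pget_cons_succ, pget_cons_zero]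
      rcases Nat.lt_or_ge 0 t.length with h | h
      · have : 0 < pget t 0 → True := fun _ => trivial
        cases t with
        | nil => simp at h
        | cons b t' => exact ha b List.mem_cons_self
      · rw [pget_eq_zero_iff.2 h]; exact Nat.zero_le _
    | succ i => rw [pget_cons_succ, pget_cons_succ]; exact ih ht i

theorem pget_anti {l : List ℕ+} (hl : l.Pairwise (· ≥ ·)) : Antitone (pget l) :=
  antitone_nat_of_succ_le (pget_succ_le hl)

theorem pget_injective {l l' : List ℕ+} (h : ∀ i, pget l i = pget l' i) : l = l' := by
  induction l generalizing l' with
  | nil =>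
    cases l' with
    | nil => rfl
    | cons b t => exact absurd (h 0).symm (by simp [pget_nil, pget_cons_zero])
  | cons a t ih =>
    cases l' with
    | nil => exact absurd (h 0) (by simp [pget_nil, pget_cons_zero])
    | cons b t' =>
      have h0 : (a : ℕ) = b := h 0
      have : t = t' := ih fun i => h (i + 1)
      simp [PNat.coe_injective h0, this]

theorem Ptn.pext {l m : Ptn} (h : ∀ i, pget l.1 i = pget m.1 i) : l = m :=
  Subtype.ext (pget_injective h)

theorem psum_cons (a : ℕ+) (l : List ℕ+) : psum (a :: l) = a + psum l := by simp [psum]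

theorem psum_eq_sum_range {l : List ℕ+} {N : ℕ} (hN : l.length ≤ N) :
    psum l = ∑ i ∈ Finset.range N, pget l i := by
  induction l generalizing N with
  | nil => simp [psum, pget_nil]
  | cons a t ih =>
    cases N with
    | zero => simp at hN
    | succ M =>
      rw [Finset.sum_range_succ']
      simp only [pget_cons_succ, pget_cons_zero, psum_cons]
      rw [← ih (by simpa using hN)]; omega

theorem length_le_psum (l : List ℕ+) : l.length ≤ psum l := by
  induction l with
  | nil => simp [psum]
  | cons a t ih => rw [psum_cons]; have := a.pos; simp; omega

theorem pget_le_psum (l : List ℕ+) (i : ℕ) : pget l i ≤ psum l := by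
  induction l generalizing i with
  | nil => simp [pget_nil]
  | cons a t ih =>
    cases i with
    | zero => rw [pget_cons_zero, psum_cons]; omega
    | succ i => rw [pget_cons_succ, psum_cons]; exact le_add_of_le_right (ih i)

end SchurAux

namespace SchurAux

/-- Build a partition from an antitone, eventually-zero function. -/
noncomputable def ofFn (f : ℕ → ℕ) (hf : ∀ k, f (k + 1) ≤ f k) (hz : ∃ N, f N = 0) : Ptn :=
  ⟨(List.range (Nat.find hz)).pmap
      (fun k (hk : k < Nat.find hz) =>
        (Nat.toPNat (f k) (Nat.pos_of_ne_zero (Nat.find_min hz hk)) : ℕ+))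
      (fun k hk => List.mem_range.1 hk), by
    rw [List.pairwise_pmap]
    refine List.Pairwise.imp_of_mem ?_ List.pairwise_lt_range
    intro a b _ _ hab h1 h2
    exact (PNat.mk_le_mk _ _ _ _).2 ((antitone_nat_of_succ_le hf) hab.le)⟩

theorem pget_eq_getElem {l : List ℕ+} {i : ℕ} (h : i < l.length) :
    pget l i = (l[i] : ℕ) := by
  induction l generalizing i with
  | nil => simp at h
  | cons a t ih =>
    cases i with
    | zero => rfl
    | succ i => simpa [pget_cons_succ] using ih (by simpa using h)

theorem length_ofFn (f : ℕ → ℕ) (hf : ∀ k, f (k + 1) ≤ f k) (hz : ∃ N, f N = 0) :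
    (ofFn f hf hz).1.length = Nat.find hz := by
  simp [ofFn]

theorem pget_ofFn (f : ℕ → ℕ) (hf : ∀ k, f (k + 1) ≤ f k) (hz : ∃ N, f N = 0) (i : ℕ) :
    pget (ofFn f hf hz).1 i = f i := by
  have hanti : Antitone f := antitone_nat_of_succ_le hf
  rcases Nat.lt_or_ge i (Nat.find hz) with h | h
  · have h' : i < (ofFn f hf hz).1.length := (length_ofFn f hf hz) ▸ h
    rw [pget_eq_getElem h']
    simp only [ofFn, List.getElem_pmap, List.getElem_range]
    rfl
  · rw [pget_eq_zero_iff.2 (by rw [length_ofFn]; exact h)]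
    exact (Nat.le_zero.1 (le_of_le_of_eq (hanti h) (Nat.find_spec hz))).symm

end SchurAux


namespace SchurAux

theorem finite_psum_le (n : ℕ) : {ρ : Ptn | psum ρ.1 ≤ n}.Finite := by
  rw [← Set.finite_coe_iff]
  refine Finite.of_injective
    (fun ρ => fun k : Fin n => (⟨pget ρ.1.1 k, ?_⟩ : Fin (n + 1))) ?_
  · exact Nat.lt_succ_of_le (le_trans (pget_le_psum _ _) ρ.2)
  · intro ρ σ h
    refine Subtype.ext (Ptn.pext fun i => ?_)
    rcases Nat.lt_or_ge i n with hi | hi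
    · exact congrArg Fin.val (congrFun h ⟨i, hi⟩)
    · rw [pget_eq_zero_iff.2 (le_trans (le_trans (length_le_psum _) ρ.2) hi),
        pget_eq_zero_iff.2 (le_trans (le_trans (length_le_psum _) σ.2) hi)]

theorem psum_le_of_hstrip {lam μ : Ptn} {i : ℕ} (h : HStrip lam μ i) :
    psum μ.1 ≤ psum lam.1 + i := le_of_eq h.2.2

theorem finite_strips (lam : Ptn) (i : ℕ) : {μ : Ptn | HStrip lam μ i}.Finite :=
  (finite_psum_le (psum lam.1 + i)).subset fun μ hμ => psum_le_of_hstrip hμ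

noncomputable def stripFinset (lam : Ptn) (i : ℕ) : Finset Ptn :=
  (finite_strips lam i).toFinset

theorem mem_stripFinset {lam μ : Ptn} {i : ℕ} :
    μ ∈ stripFinset lam i ↔ HStrip lam μ i := Set.Finite.mem_toFinset _

/-- Lexicographic (strict) order on partitions via `pget`. -/
def PLt (l m : Ptn) : Prop :=
  ∃ i, (∀ j < i, pget l.1 j = pget m.1 j) ∧ pget l.1 i < pget m.1 i

theorem PLt.ne {l m : Ptn} (h : PLt l m) : l ≠ m := by
  rintro rfl; rcases h with ⟨i, -, hlt⟩; exact lt_irrefl _ hlt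

theorem PLt.asymm {l m : Ptn} (h : PLt l m) (h' : PLt m l) : False := by
  rcases h with ⟨i, hpre, hlt⟩
  rcases h' with ⟨i', hpre', hlt'⟩
  rcases Nat.lt_trichotomy i i' with hc | hEq | hc
  · rw [hpre' i hc] at hlt; exact lt_irrefl _ hlt
  · subst hEq; exact lt_irrefl _ (hlt.trans hlt')
  · rw [hpre i' hc] at hlt'; exact lt_irrefl _ hlt'

theorem PLt.trans {l m k : Ptn} (h : PLt l m) (h' : PLt m k) : PLt l k := by
  rcases h with ⟨i, hpre, hlt⟩
  rcases h' with ⟨i', hpre', hlt'⟩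
  rcases Nat.lt_trichotomy i i' with hc | rfl | hc
  · exact ⟨i, fun j hj => (hpre j hj).trans (hpre' j (hj.trans hc)),
      hlt.trans_le (le_of_eq (hpre' i hc))⟩
  · exact ⟨i, fun j hj => (hpre j hj).trans (hpre' j hj), hlt.trans hlt'⟩
  · exact ⟨i', fun j hj => (hpre j (hj.trans hc)).trans (hpre' j hj),
      lt_of_le_of_lt (le_of_eq (hpre i' hc)) hlt'⟩

noncomputable def rank (lam : Ptn) : ℕ :=
  {ρ : Ptn | psum ρ.1 = psum lam.1 ∧ (ρ = lam ∨ PLt lam ρ)}.ncard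

theorem rank_lt_of_plt {lam μ : Ptn} (hsum : psum μ.1 = psum lam.1) (hlt : PLt lam μ) :
    rank μ < rank lam := by
  have hfin : {ρ : Ptn | psum ρ.1 = psum lam.1 ∧ (ρ = lam ∨ PLt lam ρ)}.Finite :=
    ((finite_psum_le (psum lam.1)).subset fun ρ hρ => le_of_eq hρ.1)
  refine Set.ncard_lt_ncard ?_ hfin
  constructor
  · rintro ρ ⟨h1, h2⟩
    refine ⟨h1.trans hsum, Or.inr ?_⟩
    rcases h2 with rfl | h2
    · exact hlt
    · exact hlt.trans h2
  · intro hsub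
    have : lam ∈ {ρ : Ptn | psum ρ.1 = psum μ.1 ∧ (ρ = μ ∨ PLt μ ρ)} :=
      hsub ⟨rfl, Or.inl rfl⟩
    rcases this.2 with rfl | h2
    · exact hlt.ne rfl
    · exact hlt.asymm h2

theorem rank_pos (lam : Ptn) : 0 < rank lam := by
  have hfin : {ρ : Ptn | psum ρ.1 = psum lam.1 ∧ (ρ = lam ∨ PLt lam ρ)}.Finite :=
    ((finite_psum_le (psum lam.1)).subset fun ρ hρ => le_of_eq hρ.1)
  exact (Set.ncard_pos hfin).2 ⟨lam, ⟨rfl, Or.inl rfl⟩⟩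

end SchurAux

namespace SchurAux

def appendPtn (lam : Ptn) (r : ℕ+) (h : ∀ p ∈ lam.1, r ≤ p) : Ptn :=
  ⟨lam.1 ++ [r], List.pairwise_append.2 ⟨lam.2, List.pairwise_singleton _ _,
      fun a ha b hb => by rw [List.mem_singleton.1 hb]; exact h a ha⟩⟩

theorem pget_append_lt {l : List ℕ+} {r : ℕ+} {i : ℕ} (h : i < l.length) :
    pget (l ++ [r]) i = pget l i := by
  rw [pget_eq_getElem (by simp; omega), pget_eq_getElem h, List.getElem_append_left h]

theorem pget_append_eq (l : List ℕ+) (r : ℕ+) : pget (l ++ [r]) l.length = r := by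
  rw [pget_eq_getElem (by simp)]
  simp

theorem pget_append_gt {l : List ℕ+} {r : ℕ+} {i : ℕ} (h : l.length < i) :
    pget (l ++ [r]) i = 0 := pget_eq_zero_iff.2 (by simp; omega)

theorem psum_append (l : List ℕ+) (r : ℕ+) : psum (l ++ [r]) = psum l + r := by
  simp [psum]

theorem hstrip_appendPtn (lam : Ptn) (r : ℕ+) (h : ∀ p ∈ lam.1, r ≤ p) :
    HStrip lam (appendPtn lam r h) (r : ℕ) := by
  set m := lam.1.length with hm
  have hlam0 : pget lam.1 m = 0 := pget_eq_zero_iff.2 le_rfl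
  refine ⟨fun i => ?_, fun n => ?_, psum_append _ _⟩
  · rcases Nat.lt_trichotomy i m with hc | rfl | hc
    · rw [show (appendPtn lam r h).1 = lam.1 ++ [r] from rfl, pget_append_lt hc]
    · rw [pget_eq_zero_iff.2 le_rfl]; exact Nat.zero_le _
    · rw [pget_eq_zero_iff.2 (by omega)]; exact Nat.zero_le _
  · show pget (lam.1 ++ [r]) (n + 1) ≤ pget lam.1 n
    rcases Nat.lt_trichotomy (n + 1) m with hc | hEq | hc
    · rw [pget_append_lt hc]; exact pget_succ_le lam.2 n
    · have hn : n < lam.1.length := by omega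
      have e1 : pget (lam.1 ++ [r]) (n + 1) = r := by rw [hEq]; exact pget_append_eq _ _
      rw [e1, pget_eq_getElem hn]
      exact h _ (List.getElem_mem hn)
    · rw [pget_append_gt (by omega)]; exact Nat.zero_le _

theorem plt_of_strip_ne {lam' : Ptn} {r : ℕ+} (h : ∀ p ∈ lam'.1, r ≤ p) {μ : Ptn}
    (hμ : HStrip lam' μ (r : ℕ)) (hne : μ ≠ appendPtn lam' r h) :
    PLt (appendPtn lam' r h) μ := by
  classical
  set m := lam'.1.length with hm
  set Λ := appendPtn lam' r h with hΛ
  have hΛ1 : Λ.1 = lam'.1 ++ [r] := rfl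
  have hc : ∀ k, m + 1 ≤ k → pget μ.1 k = 0 := by
    intro k hk
    have h1 : pget μ.1 k ≤ pget lam'.1 (k - 1) := by
      have := hμ.2.1 (k - 1)
      rwa [show k - 1 + 1 = k by omega] at this
    have h2 : pget lam'.1 (k - 1) = 0 := pget_eq_zero_iff.2 (by omega)
    omega
  have hΛz : ∀ k, m + 1 ≤ k → pget Λ.1 k = 0 := by
    intro k hk; rw [hΛ1]; exact pget_append_gt (by omega)
  have hD : ∃ i, pget Λ.1 i ≠ pget μ.1 i := by
    by_contra hall
    push_neg at hall
    exact hne (Ptn.pext fun i => (hall i).symm)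
  set i₀ := Nat.find hD with hi₀
  have hspec : pget Λ.1 i₀ ≠ pget μ.1 i₀ := Nat.find_spec hD
  have hpre : ∀ j < i₀, pget Λ.1 j = pget μ.1 j := by
    intro j hj
    by_contra hne'
    exact absurd (Nat.find_min hD hj) (by simpa using hne')
  have hle : i₀ ≤ m := by
    by_contra hgt
    exact hspec (by rw [hΛz i₀ (by omega), hc i₀ (by omega)])
  rcases Nat.lt_or_ge i₀ m with hlt | hge
  · refine ⟨i₀, hpre, ?_⟩
    have e : pget Λ.1 i₀ = pget lam'.1 i₀ := by rw [hΛ1]; exact pget_append_lt hlt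
    rw [e]
    exact lt_of_le_of_ne (hμ.1 i₀) fun hEq => hspec (by rw [e, hEq])
  · exfalso
    have hi0 : i₀ = m := le_antisymm hle hge
    have hlenμ : μ.1.length ≤ m + 1 := pget_eq_zero_iff.1 (hc (m + 1) le_rfl)
    have hlenΛ : Λ.1.length ≤ m + 1 := by rw [hΛ1]; simp [hm]
    have hsum : psum Λ.1 = psum μ.1 := by
      rw [hΛ1, psum_append, hμ.2.2]
    rw [psum_eq_sum_range (N := m + 1) hlenΛ, psum_eq_sum_range (N := m + 1) hlenμ,
      Finset.sum_range_succ, Finset.sum_range_succ] at hsum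
    have : ∑ k ∈ Finset.range m, pget Λ.1 k = ∑ k ∈ Finset.range m, pget μ.1 k :=
      Finset.sum_congr rfl fun k hk => hpre k (by rw [hi0]; exact Finset.mem_range.1 hk)
    rw [this] at hsum
    exact hspec (by rw [hi0]; omega)

end SchurAux

namespace SchurAux

def Lf (ν ρ : Ptn) (k : ℕ) : ℕ := max (pget ν.1 k) (pget ρ.1 (k + 1))

def Uf (ν ρ : Ptn) : ℕ → ℕ
  | 0 => pget ρ.1 0
  | (k + 1) => min (pget ρ.1 (k + 1)) (pget ν.1 k)

def Ff (ν ρ μ : Ptn) (k : ℕ) : ℕ := Lf ν ρ k + Uf ν ρ k - pget μ.1 k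

theorem flip_core {ν μ ρ : Ptn} {a b : ℕ} (h1 : HStrip ν μ a) (h2 : HStrip μ ρ b) :
    ∃ μ' : Ptn, (∀ k, pget μ'.1 k = Ff ν ρ μ k) ∧ HStrip ν μ' b ∧ HStrip μ' ρ a := by
  have hLm : ∀ k, Lf ν ρ k ≤ pget μ.1 k := fun k => max_le (h1.1 k) (h2.2.1 k)
  have hmU : ∀ k, pget μ.1 k ≤ Uf ν ρ k := by
    intro k
    cases k with
    | zero => exact h2.1 0
    | succ k => exact le_min (h2.1 (k + 1)) (h1.2.1 k)
  have hUL : ∀ k, Uf ν ρ (k + 1) ≤ pget ν.1 k := fun k => min_le_right _ _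
  have hLn : ∀ k, pget ν.1 k ≤ Lf ν ρ k := fun k => le_max_left _ _
  have hUr : ∀ k, Uf ν ρ k ≤ pget ρ.1 k := by
    intro k
    cases k with
    | zero => exact le_rfl
    | succ k => exact min_le_left _ _
  have hrL : ∀ k, pget ρ.1 (k + 1) ≤ Lf ν ρ k := fun k => le_max_right _ _
  have hFl : ∀ k, Lf ν ρ k ≤ Ff ν ρ μ k := by
    intro k; have := hLm k; have := hmU k; unfold Ff; omega
  have hFu : ∀ k, Ff ν ρ μ k ≤ Uf ν ρ k := by
    intro k; have := hLm k; have := hmU k; unfold Ff; omega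
  have hsucc : ∀ k, Ff ν ρ μ (k + 1) ≤ Ff ν ρ μ k :=
    fun k => le_trans (le_trans (hFu (k + 1)) (hUL k)) (le_trans (hLn k) (hFl k))
  set K := ρ.1.length with hK
  have hρK : ∀ j, K ≤ j → pget ρ.1 j = 0 := fun j hj => pget_eq_zero_iff.2 hj
  have hνρ : ∀ k, pget ν.1 k ≤ pget ρ.1 k := fun k => le_trans (h1.1 k) (h2.1 k)
  have hFz : Ff ν ρ μ K = 0 := by
    have h3 := hρK K le_rfl
    have h4 := hρK (K + 1) (by omega)
    have h5 := hνρ K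
    have h6 := hFu K
    have h7 := hUr K
    omega
  set μ' : Ptn := ofFn (Ff ν ρ μ) hsucc ⟨K, hFz⟩ with hμ'
  have hpg : ∀ k, pget μ'.1 k = Ff ν ρ μ k := fun k => pget_ofFn _ _ _ k
  have hlenν : ν.1.length ≤ K := pget_eq_zero_iff.1
    (Nat.le_zero.1 (le_of_le_of_eq (hνρ K) (hρK K le_rfl)))
  have hlenμ : μ.1.length ≤ K := pget_eq_zero_iff.1
    (Nat.le_zero.1 (le_of_le_of_eq (h2.1 K) (hρK K le_rfl)))
  have hlenμ' : μ'.1.length ≤ K := pget_eq_zero_iff.1 (by rw [hpg]; exact hFz)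
  -- the sum computation
  have e1 : ∑ k ∈ Finset.range (K + 1), Ff ν ρ μ k + psum μ.1
      = ∑ k ∈ Finset.range (K + 1), (Lf ν ρ k + Uf ν ρ k) := by
    rw [psum_eq_sum_range (N := K + 1) (by omega), ← Finset.sum_add_distrib]
    refine Finset.sum_congr rfl fun k _ => ?_
    have := hLm k; have := hmU k; unfold Ff; omega
  have e2 : ∑ k ∈ Finset.range (K + 1), (Lf ν ρ k + Uf ν ρ k)
      = psum ν.1 + psum ρ.1 := by
    rw [Finset.sum_add_distrib, Finset.sum_range_succ (f := Lf ν ρ),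
      Finset.sum_range_succ' (f := Uf ν ρ)]
    have eL : Lf ν ρ K = 0 := by
      have h4 := hρK (K + 1) (by omega)
      have h5 : pget ν.1 K = 0 := Nat.le_zero.1 (le_of_le_of_eq (hνρ K) (hρK K le_rfl))
      unfold Lf; omega
    have eLU : ∑ k ∈ Finset.range K, Lf ν ρ k + ∑ k ∈ Finset.range K, Uf ν ρ (k + 1)
        = ∑ k ∈ Finset.range K, pget ν.1 k + ∑ k ∈ Finset.range K, pget ρ.1 (k + 1) := by
      rw [← Finset.sum_add_distrib, ← Finset.sum_add_distrib]
      refine Finset.sum_congr rfl fun k _ => ?_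
      simp only [Lf, Uf]; omega
    have eν : ∑ k ∈ Finset.range K, pget ν.1 k = psum ν.1 :=
      (psum_eq_sum_range hlenν).symm
    have eρ : pget ρ.1 0 + ∑ k ∈ Finset.range K, pget ρ.1 (k + 1) = psum ρ.1 := by
      rw [psum_eq_sum_range (N := K + 1) (by omega), Finset.sum_range_succ']; omega
    have eU0 : Uf ν ρ 0 = pget ρ.1 0 := rfl
    omega
  have hAs : psum μ'.1 = ∑ k ∈ Finset.range (K + 1), Ff ν ρ μ k := by
    rw [psum_eq_sum_range (N := K + 1) (by omega)]
    exact Finset.sum_congr rfl fun k _ => hpg k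
  have hsum1 : psum μ.1 = psum ν.1 + a := h1.2.2
  have hsum2 : psum ρ.1 = psum μ.1 + b := h2.2.2
  have hsum' : psum μ'.1 = psum ν.1 + b := by omega
  refine ⟨μ', hpg, ?_, ?_⟩
  · exact ⟨fun k => by rw [hpg]; exact le_trans (hLn k) (hFl k),
      fun n => by rw [hpg]; exact le_trans (hFu (n + 1)) (hUL n), hsum'⟩
  · exact ⟨fun k => by rw [hpg]; exact le_trans (hFu k) (hUr k),
      fun n => by rw [hpg]; exact le_trans (hrL n) (hFl n), by omega⟩

end SchurAux

namespace SchurAux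

theorem Lf_le_of_strips {ν μ ρ : Ptn} {a b : ℕ} (h1 : HStrip ν μ a) (h2 : HStrip μ ρ b)
    (k : ℕ) : Lf ν ρ k ≤ pget μ.1 k := max_le (h1.1 k) (h2.2.1 k)

theorem le_Uf_of_strips {ν μ ρ : Ptn} {a b : ℕ} (h1 : HStrip ν μ a) (h2 : HStrip μ ρ b)
    (k : ℕ) : pget μ.1 k ≤ Uf ν ρ k := by
  cases k with
  | zero => exact h2.1 0
  | succ k => exact le_min (h2.1 (k + 1)) (h1.2.1 k)

open Classical in
noncomputable def flipP (ν ρ : Ptn) (a b : ℕ) (μ : Ptn) : Ptn :=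
  if h : HStrip ν μ a ∧ HStrip μ ρ b then (flip_core h.1 h.2).choose else emptyPtn

theorem flipP_spec {ν ρ : Ptn} {a b : ℕ} {μ : Ptn} (h1 : HStrip ν μ a) (h2 : HStrip μ ρ b) :
    (∀ k, pget (flipP ν ρ a b μ).1 k = Ff ν ρ μ k) ∧
      HStrip ν (flipP ν ρ a b μ) b ∧ HStrip (flipP ν ρ a b μ) ρ a := by
  rw [flipP]
  rw [dif_pos ⟨h1, h2⟩]
  exact (flip_core h1 h2).choose_spec

theorem flipP_flipP {ν ρ : Ptn} {a b : ℕ} {μ : Ptn} (h1 : HStrip ν μ a) (h2 : HStrip μ ρ b) :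
    flipP ν ρ b a (flipP ν ρ a b μ) = μ := by
  obtain ⟨hp, hs1, hs2⟩ := flipP_spec h1 h2
  obtain ⟨hp', -, -⟩ := flipP_spec hs1 hs2
  refine Ptn.pext fun k => ?_
  rw [hp' k]
  have e1 := Lf_le_of_strips h1 h2 k
  have e2 := le_Uf_of_strips h1 h2 k
  unfold Ff
  rw [hp k]
  unfold Ff
  omega

abbrev V : Type := Ptn →₀ ℚ

noncomputable def Uop (i : ℕ) : V →ₗ[ℚ] V :=
  Finsupp.linearCombination ℚ (fun lam => ∑ μ ∈ stripFinset lam i, Finsupp.single μ (1 : ℚ))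

theorem Uop_single (i : ℕ) (lam : Ptn) :
    Uop i (Finsupp.single lam 1) = ∑ μ ∈ stripFinset lam i, Finsupp.single μ (1 : ℚ) := by
  simp [Uop]

theorem Uop_comm_single (i j : ℕ) (ν : Ptn) :
    Uop i (Uop j (Finsupp.single ν 1)) = Uop j (Uop i (Finsupp.single ν 1)) := by
  rw [Uop_single, Uop_single, map_sum, map_sum]
  simp_rw [Uop_single]
  rw [Finset.sum_sigma', Finset.sum_sigma']
  refine Finset.sum_bij' (fun p hp => (⟨flipP ν p.2 j i p.1, p.2⟩ : Σ _ : Ptn, Ptn))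
    (fun p hp => (⟨flipP ν p.2 i j p.1, p.2⟩ : Σ _ : Ptn, Ptn)) ?_ ?_ ?_ ?_ ?_
  · intro p hp
    rw [Finset.mem_sigma] at hp ⊢
    obtain ⟨h1, h2⟩ := hp
    rw [mem_stripFinset] at h1 h2
    obtain ⟨-, hs1, hs2⟩ := flipP_spec h1 h2
    exact ⟨mem_stripFinset.2 hs1, mem_stripFinset.2 hs2⟩
  · intro p hp
    rw [Finset.mem_sigma] at hp ⊢
    obtain ⟨h1, h2⟩ := hp
    rw [mem_stripFinset] at h1 h2
    obtain ⟨-, hs1, hs2⟩ := flipP_spec h1 h2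
    exact ⟨mem_stripFinset.2 hs1, mem_stripFinset.2 hs2⟩
  · intro p hp
    rw [Finset.mem_sigma] at hp
    obtain ⟨h1, h2⟩ := hp
    rw [mem_stripFinset] at h1 h2
    show (⟨flipP ν p.2 i j (flipP ν p.2 j i p.1), p.2⟩ : Σ _ : Ptn, Ptn) = p
    rw [flipP_flipP h1 h2]
  · intro p hp
    rw [Finset.mem_sigma] at hp
    obtain ⟨h1, h2⟩ := hp
    rw [mem_stripFinset] at h1 h2
    show (⟨flipP ν p.2 j i (flipP ν p.2 i j p.1), p.2⟩ : Σ _ : Ptn, Ptn) = p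
    rw [flipP_flipP h1 h2]
  · intro p hp
    rfl

theorem Uop_comm (i j : ℕ) (x : V) : Uop i (Uop j x) = Uop j (Uop i x) := by
  have : (Uop i).comp (Uop j) = (Uop j).comp (Uop i) := by
    refine Finsupp.lhom_ext' fun lam => ?_
    refine LinearMap.ext_ring ?_
    simpa using Uop_comm_single i j lam
  exact DFunLike.congr_fun this x

end SchurAux


namespace SchurAux

def dropPtn (lam : Ptn) : Ptn := ⟨lam.1.dropLast, lam.2.sublist (List.dropLast_sublist _)⟩

theorem getLast_min {l : List ℕ+} (hl : l.Pairwise (· ≥ ·)) (hne : l ≠ []) {p : ℕ+}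
    (hp : p ∈ l) : l.getLast hne ≤ p := by
  have hdec := List.dropLast_append_getLast hne
  rw [← hdec] at hp hl
  rcases List.mem_append.1 hp with hp' | hp'
  · exact (List.pairwise_append.1 hl).2.2 p hp' _ (List.mem_singleton_self _)
  · rw [List.mem_singleton.1 hp']

theorem getLast_min_drop (lam : Ptn) (h : lam.1 ≠ []) :
    ∀ p ∈ (dropPtn lam).1, lam.1.getLast h ≤ p :=
  fun p hp => getLast_min lam.2 h ((List.dropLast_sublist _).subset hp)

theorem append_drop (lam : Ptn) (h : lam.1 ≠ []) :
    appendPtn (dropPtn lam) (lam.1.getLast h) (getLast_min_drop lam h) = lam :=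
  Subtype.ext (List.dropLast_append_getLast h)

theorem psum_drop (lam : Ptn) (h : lam.1 ≠ []) :
    psum (dropPtn lam).1 + (lam.1.getLast h : ℕ) = psum lam.1 := by
  conv_rhs => rw [← List.dropLast_append_getLast h]
  rw [psum_append]
  rfl

theorem strip_mem_measure {lam' : Ptn} {r : ℕ+} (h : ∀ p ∈ lam'.1, r ≤ p) {μ : Ptn}
    (hμ : HStrip lam' μ (r : ℕ)) (hne : μ ≠ appendPtn lam' r h) :
    psum μ.1 = psum (appendPtn lam' r h).1 ∧ rank μ < rank (appendPtn lam' r h) := by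
  have hsum : psum μ.1 = psum (appendPtn lam' r h).1 := by
    rw [show (appendPtn lam' r h).1 = lam'.1 ++ [r] from rfl, psum_append, hμ.2.2]
  exact ⟨hsum, rank_lt_of_plt hsum (plt_of_strip_ne h hμ hne)⟩

noncomputable def sF (lam : Ptn) : MvPolynomial ℕ+ ℚ :=
  if h : lam.1 = [] then 1
  else
    hGen (lam.1.getLast h) * sF (dropPtn lam) -
      ∑ μ ∈ ((stripFinset (dropPtn lam) ((lam.1.getLast h : ℕ))).erase lam).attach, sF μ.1
termination_by (psum lam.1, rank lam)
decreasing_by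
  · have hps := psum_drop lam h
    have : (lam.1.getLast h : ℕ) > 0 := (lam.1.getLast h).pos
    exact Prod.Lex.left _ _ (by omega)
  · have hmem := μ.2
    rw [Finset.mem_erase] at hmem
    obtain ⟨hne, hmem⟩ := hmem
    rw [mem_stripFinset] at hmem
    have h2 := strip_mem_measure (getLast_min_drop lam h) hmem
      (by rw [append_drop lam h]; exact hne)
    rw [append_drop lam h] at h2
    rw [h2.1]
    exact Prod.Lex.right _ h2.2

theorem sF_empty' (lam : Ptn) (h : lam.1 = []) : sF lam = 1 := by
  rw [sF, dif_pos h]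

theorem sF_eq_of_ne (lam : Ptn) (h : lam.1 ≠ []) :
    sF lam = hGen (lam.1.getLast h) * sF (dropPtn lam) -
      ∑ μ ∈ (stripFinset (dropPtn lam) ((lam.1.getLast h : ℕ))).erase lam, sF μ := by
  rw [sF, dif_neg h, Finset.sum_attach]

theorem sF_append_rel (lam' : Ptn) (r : ℕ+) (h : ∀ p ∈ lam'.1, r ≤ p) :
    hGen r * sF lam' = ∑ μ ∈ stripFinset lam' (r : ℕ), sF μ := by
  set Λ := appendPtn lam' r h with hΛ
  have hne : Λ.1 ≠ [] := by simp [hΛ, appendPtn]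
  have hdrop : dropPtn Λ = lam' := Subtype.ext (by
    show (lam'.1 ++ [r]).dropLast = lam'.1
    simp)
  have hlast : Λ.1.getLast hne = r := by
    show (lam'.1 ++ [r]).getLast _ = r
    exact List.getLast_concat
  have hmem : Λ ∈ stripFinset lam' (r : ℕ) := mem_stripFinset.2 (hstrip_appendPtn _ _ h)
  have hrel := sF_eq_of_ne Λ hne
  rw [hdrop, hlast] at hrel
  rw [← Finset.add_sum_erase _ _ hmem, hrel]
  ring

end SchurAux

namespace SchurAux

theorem Theta_single (μ : Ptn) :
    Finsupp.linearCombination ℚ sF (Finsupp.single μ 1) = sF μ := by simp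

theorem Theta_UU (j k : ℕ) (ν0 : Ptn) :
    Finsupp.linearCombination ℚ sF (Uop k (Uop j (Finsupp.single ν0 1)))
      = ∑ ν ∈ stripFinset ν0 j, ∑ ρ ∈ stripFinset ν k, sF ρ := by
  rw [Uop_single, map_sum, map_sum]
  refine Finset.sum_congr rfl fun ν _ => ?_
  rw [Uop_single, map_sum]
  exact Finset.sum_congr rfl fun ρ _ => Theta_single ρ

theorem sF_pieri (i : ℕ+) (lam : Ptn) :
    hGen i * sF lam = ∑ μ ∈ stripFinset lam (i : ℕ), sF μ := by
  by_cases hall : ∀ p ∈ lam.1, i ≤ p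
  · exact sF_append_rel lam i hall
  · push_neg at hall
    obtain ⟨q, hq, hqi⟩ := hall
    have hne : lam.1 ≠ [] := by rintro hnil; rw [hnil] at hq; simp at hq
    have hri : ((lam.1.getLast hne : ℕ+) : ℕ) < (i : ℕ) :=
      (PNat.coe_lt_coe _ _).2 (lt_of_le_of_lt (getLast_min lam.2 hne hq) hqi)
    have hmin : ∀ p ∈ (dropPtn lam).1, lam.1.getLast hne ≤ p := getLast_min_drop lam hne
    have happ : appendPtn (dropPtn lam) (lam.1.getLast hne) hmin = lam := append_drop lam hne
    have hmem : lam ∈ stripFinset (dropPtn lam) ((lam.1.getLast hne : ℕ+) : ℕ) := by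
      refine mem_stripFinset.2 ?_
      have hx := hstrip_appendPtn (dropPtn lam) (lam.1.getLast hne) hmin
      rwa [happ] at hx
    have hsF := sF_eq_of_ne lam hne
    have IH1 : hGen i * sF (dropPtn lam)
        = ∑ ν ∈ stripFinset (dropPtn lam) (i : ℕ), sF ν := by
      have hps := psum_drop lam hne
      have hpos : 0 < ((lam.1.getLast hne : ℕ+) : ℕ) := (lam.1.getLast hne).pos
      exact sF_pieri i (dropPtn lam)
    have IH2 : ∀ ν ∈ stripFinset (dropPtn lam) (i : ℕ),
        hGen (lam.1.getLast hne) * sF ν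
          = ∑ ρ ∈ stripFinset ν ((lam.1.getLast hne : ℕ+) : ℕ), sF ρ := by
      intro ν hν
      have hstr := mem_stripFinset.1 hν
      have hsν : psum ν.1 = psum (dropPtn lam).1 + (i : ℕ) := hstr.2.2
      have hps := psum_drop lam hne
      exact sF_pieri (lam.1.getLast hne) ν
    have IH3 : ∀ μ ∈ (stripFinset (dropPtn lam) ((lam.1.getLast hne : ℕ+) : ℕ)).erase lam,
        hGen i * sF μ = ∑ ρ ∈ stripFinset μ (i : ℕ), sF ρ := by
      intro μ hμ
      rw [Finset.mem_erase] at hμ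
      obtain ⟨hμne, hμmem⟩ := hμ
      have h2 := strip_mem_measure hmin (mem_stripFinset.1 hμmem) (by rw [happ]; exact hμne)
      rw [happ] at h2
      have hps1 : psum μ.1 = psum lam.1 := h2.1
      have hrk : rank μ < rank lam := h2.2
      exact sF_pieri i μ
    -- the commutation identity
    have hC : ∑ ν ∈ stripFinset (dropPtn lam) (i : ℕ),
          ∑ ρ ∈ stripFinset ν ((lam.1.getLast hne : ℕ+) : ℕ), sF ρ
        = ∑ μ ∈ stripFinset (dropPtn lam) ((lam.1.getLast hne : ℕ+) : ℕ),
          ∑ ρ ∈ stripFinset μ (i : ℕ), sF ρ := by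
      rw [← Theta_UU (i : ℕ) ((lam.1.getLast hne : ℕ+) : ℕ) (dropPtn lam),
        ← Theta_UU ((lam.1.getLast hne : ℕ+) : ℕ) (i : ℕ) (dropPtn lam), Uop_comm]
    have hsplit : ∑ μ ∈ stripFinset (dropPtn lam) ((lam.1.getLast hne : ℕ+) : ℕ),
          ∑ ρ ∈ stripFinset μ (i : ℕ), sF ρ
        = (∑ ρ ∈ stripFinset lam (i : ℕ), sF ρ)
          + ∑ μ ∈ (stripFinset (dropPtn lam) ((lam.1.getLast hne : ℕ+) : ℕ)).erase lam,
            ∑ ρ ∈ stripFinset μ (i : ℕ), sF ρ :=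
      (Finset.add_sum_erase _ _ hmem).symm
    calc hGen i * sF lam
        = hGen (lam.1.getLast hne) * (hGen i * sF (dropPtn lam))
          - ∑ μ ∈ (stripFinset (dropPtn lam) ((lam.1.getLast hne : ℕ+) : ℕ)).erase lam,
              hGen i * sF μ := by
          rw [hsF, mul_sub, Finset.mul_sum]; ring
      _ = ∑ ν ∈ stripFinset (dropPtn lam) (i : ℕ),
            ∑ ρ ∈ stripFinset ν ((lam.1.getLast hne : ℕ+) : ℕ), sF ρ
          - ∑ μ ∈ (stripFinset (dropPtn lam) ((lam.1.getLast hne : ℕ+) : ℕ)).erase lam,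
              ∑ ρ ∈ stripFinset μ (i : ℕ), sF ρ := by
          rw [IH1, Finset.mul_sum]
          rw [Finset.sum_congr rfl IH2, Finset.sum_congr rfl IH3]
      _ = ∑ μ ∈ stripFinset lam (i : ℕ), sF μ := by
          rw [hC, hsplit]; ring
termination_by (psum lam.1 + (i : ℕ), (i : ℕ), rank lam)
decreasing_by
  · refine Prod.Lex.left _ _ ?_
    omega
  · rw [show psum ν.1 + ((lam.1.getLast hne : ℕ+) : ℕ)
        = psum lam.1 + (i : ℕ) by omega]
    exact Prod.Lex.right _ (Prod.Lex.left _ _ hri)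
  · rw [hps1]
    exact Prod.Lex.right _ (Prod.Lex.right _ hrk)

end SchurAux


namespace SchurAux

theorem finsum_strips (s : Ptn → SymA) (lam : Ptn) (i : ℕ) :
    ∑ᶠ μ ∈ {μ : Ptn | HStrip lam μ i}, s μ = ∑ μ ∈ stripFinset lam i, s μ := by
  have h : {μ : Ptn | HStrip lam μ i} = ↑(stripFinset lam i) :=
    (Set.Finite.coe_toFinset _).symm
  rw [h, finsum_mem_coe_finset]

theorem pieri_unique {s : Ptn → SymA} (hs : PieriFamily s) : ∀ lam, s lam = sF lam := by
  intro lam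
  by_cases h : lam.1 = []
  · have : lam = emptyPtn := Subtype.ext h
    rw [this, hs.1, sF_empty' emptyPtn rfl]
  · have hmin : ∀ p ∈ (dropPtn lam).1, lam.1.getLast h ≤ p := getLast_min_drop lam h
    have happ : appendPtn (dropPtn lam) (lam.1.getLast h) hmin = lam := append_drop lam h
    have hmem : lam ∈ stripFinset (dropPtn lam) ((lam.1.getLast h : ℕ+) : ℕ) := by
      refine mem_stripFinset.2 ?_
      have hx := hstrip_appendPtn (dropPtn lam) (lam.1.getLast h) hmin
      rwa [happ] at hx
    have hrel := hs.2 (lam.1.getLast h) (dropPtn lam)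
    rw [finsum_strips] at hrel
    rw [← Finset.add_sum_erase _ _ hmem] at hrel
    have IH0 : s (dropPtn lam) = sF (dropPtn lam) := by
      have hps := psum_drop lam h
      have hpos : 0 < ((lam.1.getLast h : ℕ+) : ℕ) := (lam.1.getLast h).pos
      exact pieri_unique hs (dropPtn lam)
    have IHE : ∀ μ ∈ (stripFinset (dropPtn lam) ((lam.1.getLast h : ℕ+) : ℕ)).erase lam,
        s μ = sF μ := by
      intro μ hμ
      rw [Finset.mem_erase] at hμ
      obtain ⟨hμne, hμmem⟩ := hμ
      have h2 := strip_mem_measure hmin (mem_stripFinset.1 hμmem) (by rw [happ]; exact hμne)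
      rw [happ] at h2
      have hps1 : psum μ.1 = psum lam.1 := h2.1
      have hrk : rank μ < rank lam := h2.2
      exact pieri_unique hs μ
    have hsum : s lam = hGen (lam.1.getLast h) * s (dropPtn lam)
        - ∑ μ ∈ (stripFinset (dropPtn lam) ((lam.1.getLast h : ℕ+) : ℕ)).erase lam, s μ := by
      rw [hrel]; ring
    rw [hsum, IH0, Finset.sum_congr rfl IHE, ← sF_eq_of_ne lam h]
termination_by lam => (psum lam.1, rank lam)
decreasing_by
  · exact Prod.Lex.left _ _ (by omega)
  · rw [hps1]
    exact Prod.Lex.right _ hrk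

theorem pieri_family_sF : PieriFamily sF :=
  ⟨sF_empty' emptyPtn rfl, fun i lam => by rw [finsum_strips]; exact sF_pieri i lam⟩

theorem sF_span : Submodule.span ℚ (Set.range sF) = ⊤ := by
  rw [eq_top_iff]
  intro p _
  have hmul : ∀ (i : ℕ+) (x : SymA), x ∈ Submodule.span ℚ (Set.range sF) →
      hGen i * x ∈ Submodule.span ℚ (Set.range sF) := by
    intro i x hx
    induction hx using Submodule.span_induction with
    | mem y hy =>
      obtain ⟨μ, rfl⟩ := hy
      rw [sF_pieri i μ]
      exact Submodule.sum_mem _ fun ρ _ => Submodule.subset_span ⟨ρ, rfl⟩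
    | zero => rw [mul_zero]; exact Submodule.zero_mem _
    | add y z hy hz hy' hz' => rw [mul_add]; exact Submodule.add_mem _ hy' hz'
    | smul a y hy hy' => rw [mul_smul_comm]; exact Submodule.smul_mem _ a hy'
  induction p using MvPolynomial.induction_on with
  | C a =>
    have h1 : (MvPolynomial.C a : SymA) = a • sF emptyPtn := by
      rw [sF_empty' emptyPtn rfl, MvPolynomial.smul_eq_C_mul, mul_one]
    rw [h1]
    exact Submodule.smul_mem _ a (Submodule.subset_span ⟨emptyPtn, rfl⟩)
  | add p q hp hq => exact Submodule.add_mem _ (hp trivial) (hq trivial)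
  | mul_X p i hp =>
    rw [mul_comm]
    exact hmul i p (hp trivial)

end SchurAux

namespace SchurAux

def Uset : Set (Module.End ℚ V) := Set.range fun i : ℕ+ => (Uop (i : ℕ) : V →ₗ[ℚ] V)

theorem Uset_comm : ∀ a ∈ Uset, ∀ b ∈ Uset, a * b = b * a := by
  rintro a ⟨i, rfl⟩ b ⟨j, rfl⟩
  exact LinearMap.ext fun x => Uop_comm (i : ℕ) (j : ℕ) x

noncomputable instance : CommSemiring ↥(Algebra.adjoin ℚ Uset) :=
  Algebra.adjoinCommSemiringOfComm ℚ Uset_comm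

noncomputable def phi : SymA →ₐ[ℚ] ↥(Algebra.adjoin ℚ Uset) :=
  MvPolynomial.aeval fun i : ℕ+ =>
    (⟨Uop (i : ℕ), Algebra.subset_adjoin ⟨i, rfl⟩⟩ : ↥(Algebra.adjoin ℚ Uset))

noncomputable def Psi : SymA →ₗ[ℚ] V where
  toFun p := ((phi p : Module.End ℚ V)) (Finsupp.single emptyPtn 1)
  map_add' x y := by
    show ((phi (x + y) : Module.End ℚ V)) _ = _
    rw [map_add]
    rfl
  map_smul' a x := by
    show ((phi (a • x) : Module.End ℚ V)) _ = _
    rw [map_smul]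
    rfl

theorem Psi_apply (p : SymA) :
    Psi p = ((phi p : Module.End ℚ V)) (Finsupp.single emptyPtn 1) := rfl

theorem Psi_one : Psi 1 = Finsupp.single emptyPtn 1 := by
  rw [Psi_apply, map_one]
  rfl

theorem Psi_mul_h (i : ℕ+) (p : SymA) : Psi (hGen i * p) = Uop (i : ℕ) (Psi p) := by
  rw [Psi_apply, Psi_apply]
  have h1 : phi (hGen i) = ⟨Uop (i : ℕ), Algebra.subset_adjoin ⟨i, rfl⟩⟩ :=
    MvPolynomial.aeval_X _ i
  rw [map_mul, h1]
  rfl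

theorem Psi_sF (lam : Ptn) : Psi (sF lam) = Finsupp.single lam 1 := by
  by_cases h : lam.1 = []
  · have : lam = emptyPtn := Subtype.ext h
    rw [this, sF_empty' emptyPtn rfl, Psi_one]
  · have hmin : ∀ p ∈ (dropPtn lam).1, lam.1.getLast h ≤ p := getLast_min_drop lam h
    have happ : appendPtn (dropPtn lam) (lam.1.getLast h) hmin = lam := append_drop lam h
    have hmem : lam ∈ stripFinset (dropPtn lam) ((lam.1.getLast h : ℕ+) : ℕ) := by
      refine mem_stripFinset.2 ?_
      have hx := hstrip_appendPtn (dropPtn lam) (lam.1.getLast h) hmin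
      rwa [happ] at hx
    have IH0 : Psi (sF (dropPtn lam)) = Finsupp.single (dropPtn lam) 1 := by
      have hps := psum_drop lam h
      have hpos : 0 < ((lam.1.getLast h : ℕ+) : ℕ) := (lam.1.getLast h).pos
      exact Psi_sF (dropPtn lam)
    have IHE : ∀ μ ∈ (stripFinset (dropPtn lam) ((lam.1.getLast h : ℕ+) : ℕ)).erase lam,
        Psi (sF μ) = Finsupp.single μ 1 := by
      intro μ hμ
      rw [Finset.mem_erase] at hμ
      obtain ⟨hμne, hμmem⟩ := hμ
      have h2 := strip_mem_measure hmin (mem_stripFinset.1 hμmem) (by rw [happ]; exact hμne)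
      rw [happ] at h2
      have hps1 : psum μ.1 = psum lam.1 := h2.1
      have hrk : rank μ < rank lam := h2.2
      exact Psi_sF μ
    rw [sF_eq_of_ne lam h, map_sub, map_sum, Psi_mul_h, IH0, Uop_single,
      Finset.sum_congr rfl IHE, ← Finset.add_sum_erase _ _ hmem]
    abel
termination_by (psum lam.1, rank lam)
decreasing_by
  · exact Prod.Lex.left _ _ (by omega)
  · rw [hps1]
    exact Prod.Lex.right _ hrk

theorem sF_linearIndependent : LinearIndependent ℚ sF := by
  refine LinearIndependent.of_comp Psi ?_
  have h1 : (⇑Psi ∘ sF) = fun lam : Ptn => Finsupp.single lam (1 : ℚ) :=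
    funext fun lam => Psi_sF lam
  rw [h1]
  have := (Finsupp.basisSingleOne (R := ℚ) (ι := Ptn)).linearIndependent
  rwa [Finsupp.coe_basisSingleOne] at this

end SchurAux


/-- There exists a unique family `{s_λ}` in `Sym`, indexed by partitions,
with `s_∅ = 1`, satisfying the Pieri rule; moreover, any such family is a ℚ-basis of `Sym`. -/
theorem schur_existsUnique_and_basis :
    (∃! s : Ptn → SymA, PieriFamily s) ∧
      ∀ s : Ptn → SymA, PieriFamily s →
        LinearIndependent ℚ s ∧ Submodule.span ℚ (Set.range s) = ⊤ := by
  constructor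
  · exact ⟨SchurAux.sF, SchurAux.pieri_family_sF,
      fun s hs => funext (SchurAux.pieri_unique hs)⟩
  · intro s hs
    have h : s = SchurAux.sF := funext (SchurAux.pieri_unique hs)
    rw [h]
    exact ⟨SchurAux.sF_linearIndependent, SchurAux.sF_span⟩
end

section
/- There exists a unique family {S_α} of elements of NSym, indexed by compositions, with S_∅ = 1, satisfying the noncommutative Pieri rule: for every i ≥ 1 and every composition α, H_i · S_α = Σ_β S_β, where the sum is over all compositions β with β ≥_C α such that β//α is a horizontal composition strip of size i. Moreover, this family is a ℚ-basis of NSym. -/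
/-! ## Auxiliary development -/

section Aux

open Relation

/-- Increment covers: bump the leftmost part equal to `m`. -/
def CInc (x y : List ℕ+) : Prop :=
  ∃ (m : ℕ+) (l₁ l₂ : List ℕ+), x = l₁ ++ m :: l₂ ∧ y = l₁ ++ (m + 1) :: l₂ ∧ m ∉ l₁

lemma ccover_iff {x y : List ℕ+} : CCover x y ↔ y = 1 :: x ∨ CInc x y := Iff.rfl

lemma psum_nil : psum ([] : List ℕ+) = 0 := rfl

lemma psum_cons (p : ℕ+) (l : List ℕ+) : psum (p :: l) = p + psum l := by
  simp [psum]

lemma psum_append (l₁ l₂ : List ℕ+) : psum (l₁ ++ l₂) = psum l₁ + psum l₂ := by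
  simp [psum]

lemma le_psum_of_mem {p : ℕ+} {l : List ℕ+} (h : p ∈ l) : (p : ℕ) ≤ psum l := by
  induction l with
  | nil => simp at h
  | cons q t ih =>
    rcases List.mem_cons.1 h with rfl | h
    · rw [psum_cons]; omega
    · have := ih h; rw [psum_cons]; omega

lemma psum_pos {l : List ℕ+} (h : l ≠ []) : 0 < psum l := by
  cases l with
  | nil => simp at h
  | cons p t => rw [psum_cons]; have := p.pos; omega

lemma cinc_psum {x y : List ℕ+} (h : CInc x y) : psum y = psum x + 1 := by
  obtain ⟨m, l₁, l₂, rfl, rfl, -⟩ := h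
  simp [psum_append, psum_cons]; ring

lemma cinc_length {x y : List ℕ+} (h : CInc x y) : y.length = x.length := by
  obtain ⟨m, l₁, l₂, rfl, rfl, -⟩ := h
  simp

lemma ccover_psum {x y : List ℕ+} (h : CCover x y) : psum y = psum x + 1 := by
  rcases h with rfl | h
  · rw [psum_cons]; simp; ring
  · exact cinc_psum h

lemma ccover_length {x y : List ℕ+} (h : CCover x y) :
    y.length = x.length ∨ y.length = x.length + 1 := by
  rcases h with rfl | h
  · right; simp
  · left; exact cinc_length h

lemma cle_psum_le {x y : List ℕ+} (h : CLe x y) : psum x ≤ psum y := by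
  induction h with
  | refl => exact le_rfl
  | tail _ hc ih => have := ccover_psum hc; omega

lemma cle_length_le {x y : List ℕ+} (h : CLe x y) : x.length ≤ y.length := by
  induction h with
  | refl => exact le_rfl
  | tail _ hc ih => rcases ccover_length hc with h1 | h1 <;> omega

/-- Increments-only reachability. -/
def IncLe : List ℕ+ → List ℕ+ → Prop := Relation.ReflTransGen CInc

lemma incle_psum_le {x y : List ℕ+} (h : IncLe x y) : psum x ≤ psum y := by
  induction h with
  | refl => exact le_rfl
  | tail _ hc ih => have := cinc_psum hc; omega

lemma incle_length {x y : List ℕ+} (h : IncLe x y) : y.length = x.length := by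
  induction h with
  | refl => rfl
  | tail _ hc ih => rw [cinc_length hc, ih]

lemma incle_eq_of_psum_eq {x y : List ℕ+} (h : IncLe x y) (hp : psum x = psum y) :
    x = y := by
  rcases h.cases_head with rfl | ⟨z, hz, hzy⟩
  · rfl
  · exfalso
    have h1 := cinc_psum hz
    have h2 := incle_psum_le hzy
    omega

end Aux

section Aux2

lemma incle_cle {x y : List ℕ+} (h : IncLe x y) : CLe x y :=
  Relation.ReflTransGen.mono (r := CInc) (p := CCover) (fun _ _ hc => Or.inr hc) x y h

/-- Split a `CLe` chain at the first prepend step. -/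
lemma cle_split {γ β : List ℕ+} (h : CLe γ β) :
    IncLe γ β ∨ ∃ δ, IncLe γ δ ∧ CLe (1 :: δ) β := by
  induction h using Relation.ReflTransGen.head_induction_on with
  | refl => exact Or.inl Relation.ReflTransGen.refl
  | head hc hrest ih =>
    rename_i x z
    rcases hc with rfl | hinc
    · exact Or.inr ⟨x, Relation.ReflTransGen.refl, hrest⟩
    · rcases ih with h1 | ⟨δ, h1, h2⟩
      · exact Or.inl (Relation.ReflTransGen.head hinc h1)
      · exact Or.inr ⟨δ, Relation.ReflTransGen.head hinc h1, h2⟩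

/-- Structure of increment chains starting from a cons, when the length never grew. -/
lemma cle_cons_structure {h₀ : ℕ+} {τ β : List ℕ+} (h : CLe (h₀ :: τ) β)
    (hl : β.length = τ.length + 1) :
    ∃ (h' : ℕ+) (τ' : List ℕ+), β = h' :: τ' ∧ h₀ ≤ h' ∧ IncLe τ τ' := by
  induction h with
  | refl => exact ⟨h₀, τ, rfl, le_rfl, Relation.ReflTransGen.refl⟩
  | @tail y z hxy hc ih =>
    rcases hc with rfl | hinc
    · -- prepend: length of y = length τ, contradicting monotonicity
      exfalso
      have := cle_length_le hxy
      simp at hl this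
      omega
    · have hly : y.length = τ.length + 1 := by rw [← cinc_length hinc, hl]
      obtain ⟨h1, τ1, rfl, hle, hinc1⟩ := ih hly
      obtain ⟨m, l₁, l₂, heq, rfl, hmem⟩ := hinc
      cases l₁ with
      | nil =>
        simp only [List.nil_append, List.cons.injEq] at heq
        obtain ⟨hm, hl2⟩ := heq
        subst hm; subst hl2
        exact ⟨h1 + 1, τ1, rfl, le_trans hle (le_of_lt (PNat.lt_add_right h1 1)), hinc1⟩
      | cons a l₁' =>
        simp only [List.cons_append, List.cons.injEq] at heq
        obtain ⟨ha, hl2⟩ := heq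
        subst ha; subst hl2
        refine ⟨h1, l₁' ++ (m + 1) :: l₂, rfl, hle, Relation.ReflTransGen.tail hinc1 ?_⟩
        exact ⟨m, l₁', l₂, rfl, rfl, fun hm => hmem (List.mem_cons_of_mem _ hm)⟩

/-- `b :: γ ≥_C γ`. -/
lemma cle_cons (γ : List ℕ+) (b : ℕ+) : CLe γ (b :: γ) := by
  have key : ∀ (k : ℕ) (b : ℕ+), (b : ℕ) = k + 1 → CLe γ (b :: γ) := by
    intro k
    induction k with
    | zero =>
      intro b hb
      have : b = 1 := by
        apply PNat.coe_injective; rw [hb]; rfl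
      subst this
      exact Relation.ReflTransGen.single (Or.inl rfl)
    | succ n ih =>
      intro b hb
      set c : ℕ+ := ⟨n + 1, Nat.succ_pos n⟩ with hc
      have h1 : CLe γ (c :: γ) := ih c rfl
      have h2 : b = c + 1 := by
        apply PNat.coe_injective; rw [hb, PNat.add_coe]; rfl
      subst h2
      exact Relation.ReflTransGen.tail h1 (Or.inr ⟨c, [], γ, rfl, rfl, by simp⟩)
  obtain ⟨k, hk⟩ : ∃ k : ℕ, (b : ℕ) = k + 1 := ⟨(b : ℕ) - 1, by have := b.pos; omega⟩
  exact key k b hk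
end Aux2

section Aux3

lemma pget_nil (i : ℕ) : pget [] i = 0 := rfl

lemma pget_cons_zero (p : ℕ+) (l : List ℕ+) : pget (p :: l) 0 = p := rfl

lemma pget_cons_succ (p : ℕ+) (l : List ℕ+) (i : ℕ) : pget (p :: l) (i + 1) = pget l i := rfl

lemma pget_pos {l : List ℕ+} {i : ℕ} (h : i < l.length) : 0 < pget l i := by
  induction l generalizing i with
  | nil => simp at h
  | cons p t ih =>
    cases i with
    | zero => rw [pget_cons_zero]; exact p.pos
    | succ j =>
      rw [pget_cons_succ]
      exact ih (by simpa using Nat.lt_of_succ_lt_succ h)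

/-- Lists of naturals with bounded length and entries are finite. -/
lemma finite_bdd_lists (n : ℕ) : ∀ k : ℕ,
    {l : List ℕ | l.length ≤ k ∧ ∀ x ∈ l, x ≤ n}.Finite := by
  intro k
  induction k with
  | zero =>
    apply Set.Finite.subset (Set.finite_singleton ([] : List ℕ))
    rintro l ⟨hl, -⟩
    simp at hl ⊢
    exact hl
  | succ k ih =>
    apply Set.Finite.subset
      (Set.Finite.insert [] (Set.Finite.image (fun p : ℕ × List ℕ => p.1 :: p.2)
        (Set.Finite.prod (Set.finite_Iic n) ih)))
    rintro l ⟨hl, hb⟩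
    cases l with
    | nil => exact Set.mem_insert _ _
    | cons a t =>
      refine Set.mem_insert_of_mem _ ⟨(a, t), ⟨?_, ?_, ?_⟩, rfl⟩
      · exact hb a (by simp)
      · simp only [List.length_cons] at hl
        show t.length ≤ k
        omega
      · exact fun x hx => hb x (by simp [hx])

lemma length_le_psum (l : List ℕ+) : l.length ≤ psum l := by
  induction l with
  | nil => simp [psum_nil]
  | cons p t ih =>
    rw [psum_cons]
    have := p.pos
    simp only [List.length_cons]
    omega

/-- The set of compositions of `n` is finite. -/
lemma classSet_finite (n : ℕ) : {l : List ℕ+ | psum l = n}.Finite := by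
  have hinj : Function.Injective (List.map (fun p : ℕ+ => (p : ℕ))) :=
    List.map_injective_iff.mpr (fun a b h => PNat.coe_injective h)
  apply Set.Finite.of_finite_image (f := List.map (fun p : ℕ+ => (p : ℕ))) _ hinj.injOn
  apply Set.Finite.subset (finite_bdd_lists n n)
  rintro _ ⟨l, hl, rfl⟩
  constructor
  · -- length ≤ n since each part ≥ 1
    simp only [List.length_map]
    have := length_le_psum l
    have hn : psum l = n := hl
    omega
  · rintro x hx
    simp only [List.mem_map] at hx
    obtain ⟨p, hp, rfl⟩ := hx
    rw [← hl]
    exact le_psum_of_mem hp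

end Aux3

section Aux4

/-- Length-then-lex strict order on compositions. -/
def klt (x y : List ℕ+) : Prop :=
  x.length < y.length ∨ (x.length = y.length ∧ List.Lex (· < ·) x y)

lemma lex_trans {x y z : List ℕ+} (h1 : List.Lex (· < ·) x y) (h2 : List.Lex (· < ·) y z) :
    List.Lex (· < ·) x z := List.lex_trans (fun h₁ h₂ => lt_trans h₁ h₂) h1 h2

lemma lex_irrefl (x : List ℕ+) : ¬ List.Lex (· < ·) x x := by
  induction x with
  | nil => intro h; cases h
  | cons a t ih =>
    intro h
    cases h with
    | cons h => exact ih h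
    | rel h => exact lt_irrefl _ h

lemma lex_total : ∀ x y : List ℕ+, x = y ∨ List.Lex (· < ·) x y ∨ List.Lex (· < ·) y x := by
  intro x
  induction x with
  | nil =>
    intro y
    cases y with
    | nil => exact Or.inl rfl
    | cons b s => exact Or.inr (Or.inl List.Lex.nil)
  | cons a t ih =>
    intro y
    cases y with
    | nil => exact Or.inr (Or.inr List.Lex.nil)
    | cons b s =>
      rcases lt_trichotomy a b with h | rfl | h
      · exact Or.inr (Or.inl (List.Lex.rel h))
      · rcases ih s with rfl | h | h
        · exact Or.inl rfl
        · exact Or.inr (Or.inl (List.Lex.cons h))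
        · exact Or.inr (Or.inr (List.Lex.cons h))
      · exact Or.inr (Or.inr (List.Lex.rel h))

lemma klt_trans {x y z : List ℕ+} (h1 : klt x y) (h2 : klt y z) : klt x z := by
  rcases h1 with h1 | ⟨e1, l1⟩ <;> rcases h2 with h2 | ⟨e2, l2⟩
  · exact Or.inl (lt_trans h1 h2)
  · exact Or.inl (e2 ▸ h1)
  · exact Or.inl (e1 ▸ h2)
  · exact Or.inr ⟨e1.trans e2, lex_trans l1 l2⟩

lemma klt_irrefl (x : List ℕ+) : ¬ klt x x := by
  rintro (h | ⟨-, h⟩)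
  · exact lt_irrefl _ h
  · exact lex_irrefl x h

lemma klt_trichotomy {x y : List ℕ+} (h : x ≠ y) : klt x y ∨ klt y x := by
  rcases Nat.lt_trichotomy x.length y.length with hl | hl | hl
  · exact Or.inl (Or.inl hl)
  · rcases lex_total x y with rfl | ht | ht
    · exact absurd rfl h
    · exact Or.inl (Or.inr ⟨hl, ht⟩)
    · exact Or.inr (Or.inr ⟨hl.symm, ht⟩)
  · exact Or.inr (Or.inl hl)

lemma klt_cons {x y : List ℕ+} (b : ℕ+) (h : klt x y) : klt (b :: x) (b :: y) := by
  rcases h with h | ⟨e, hl⟩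
  · exact Or.inl (by simpa using h)
  · exact Or.inr ⟨by simpa using e, List.Lex.cons hl⟩

lemma klt_head {x y : List ℕ+} {p q : ℕ+} (e : x.length = y.length) (h : p < q) :
    klt (p :: x) (q :: y) :=
  Or.inr ⟨by simpa using e, List.Lex.rel h⟩

/-- Rank of a composition within its size class. -/
noncomputable def rnk (x : List ℕ+) : ℕ := {y | psum y = psum x ∧ klt y x}.ncard

lemma rnk_set_finite (x : List ℕ+) : {y | psum y = psum x ∧ klt y x}.Finite :=
  (classSet_finite (psum x)).subset (fun _ hy => hy.1)

lemma rnk_lt_of_klt {x y : List ℕ+} (hp : psum x = psum y) (h : klt x y) : rnk x < rnk y := by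
  have hss : {z | psum z = psum x ∧ klt z x} ⊂ {z | psum z = psum y ∧ klt z y} := by
    constructor
    · rintro z ⟨hz1, hz2⟩
      exact ⟨hz1.trans hp, klt_trans hz2 h⟩
    · intro hsub
      have : x ∈ {z | psum z = psum x ∧ klt z x} := hsub ⟨hp, h⟩
      exact klt_irrefl x this.2
  exact Set.ncard_lt_ncard hss ((classSet_finite (psum y)).subset (fun z hz => hz.1))

lemma rnk_lt_Ncl (x : List ℕ+) : rnk x < {l : List ℕ+ | psum l = psum x}.ncard := by
  apply Set.ncard_lt_ncard _ (classSet_finite (psum x))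
  constructor
  · exact fun y hy => hy.1
  · intro hsub
    exact klt_irrefl x (hsub rfl).2

/-- Accumulated sizes of smaller classes. -/
noncomputable def Bacc (n : ℕ) : ℕ :=
  ∑ k ∈ Finset.range n, {l : List ℕ+ | psum l = k}.ncard

/-- Global well-founded measure on compositions. -/
noncomputable def nu (x : List ℕ+) : ℕ := Bacc (psum x) + rnk x

lemma nu_lt_of_psum_lt {x y : List ℕ+} (h : psum x < psum y) : nu x < nu y := by
  have h1 : nu x < Bacc (psum x + 1) := by
    rw [Bacc, Finset.sum_range_succ]
    have := rnk_lt_Ncl x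
    unfold nu Bacc
    omega
  have h2 : Bacc (psum x + 1) ≤ Bacc (psum y) := by
    unfold Bacc
    exact Finset.sum_le_sum_of_subset (Finset.range_subset_range.mpr h)
  unfold nu at *
  omega

lemma nu_lt_of_klt {x y : List ℕ+} (hp : psum x = psum y) (h : klt x y) : nu x < nu y := by
  unfold nu
  rw [hp]
  exact Nat.add_lt_add_left (rnk_lt_of_klt hp h) _

lemma nu_lt_cons (γ : List ℕ+) (b : ℕ+) : nu γ < nu (b :: γ) := by
  apply nu_lt_of_psum_lt
  rw [psum_cons]
  have := b.pos
  omega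

end Aux4

section Aux5

lemma stripSet_finite (γ : List ℕ+) (i : ℕ) : {β | HCStrip γ β i}.Finite := by
  apply (classSet_finite (psum γ + i)).subset
  rintro β ⟨-, hsum, -⟩
  exact hsum

lemma hcstrip_cons (γ : List ℕ+) (b : ℕ+) : HCStrip γ (b :: γ) (b : ℕ) := by
  refine ⟨cle_cons γ b, by rw [psum_cons]; ring, ?_⟩
  have hcell : ∀ r c, stripCell γ (b :: γ) r c → r = 0 := by
    rintro r c ⟨h1, h2, h3⟩
    by_contra hr
    obtain ⟨t, rfl⟩ : ∃ t, r = t + 1 := ⟨r - 1, by omega⟩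
    have hdiff : (b :: γ).length - γ.length = 1 := by simp
    rw [hdiff] at h3
    rcases h3 with h3 | h3
    · omega
    · rw [pget_cons_succ] at h2
      simp only [Nat.add_sub_cancel] at h3
      omega
  intro r s c hrs hc1 hc2
  have := hcell r c hc1
  have := hcell s c hc2
  omega

/-- Key triangularity lemma: any strip of size `b` over `γ` other than `b :: γ`
is strictly smaller in the measure. -/
lemma key_lt {γ β : List ℕ+} {b : ℕ+} (h : HCStrip γ β (b : ℕ)) (hne : β ≠ b :: γ) :
    nu β < nu (b :: γ) := by
  obtain ⟨hle, hsum, hcol⟩ := h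
  have hps : psum β = psum (b :: γ) := by rw [psum_cons]; omega
  have hlen2 : β.length ≤ γ.length + 1 := by
    by_contra hh
    push_neg at hh
    have hlb : γ.length + 2 ≤ β.length := hh
    have cell0 : stripCell γ β 0 0 :=
      ⟨by omega, pget_pos (by omega), Or.inl (by omega)⟩
    have cell1 : stripCell γ β 1 0 :=
      ⟨by omega, pget_pos (by omega), Or.inl (by omega)⟩
    exact hcol 0 1 0 (by omega) cell0 cell1
  rcases Nat.lt_or_ge β.length (γ.length + 1) with hlt | hge
  · exact nu_lt_of_klt hps (Or.inl (by simpa using hlt))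
  · have hleq : β.length = γ.length + 1 := by omega
    rcases cle_split hle with hinc | ⟨δ, hincd, hcle⟩
    · exfalso
      have := incle_length hinc
      omega
    · have hld : δ.length = γ.length := incle_length hincd
      obtain ⟨h', τ', rfl, hh', hincτ⟩ :=
        cle_cons_structure hcle (by simp [hld] at hleq ⊢; omega)
      have hlτ : τ'.length = γ.length := by rw [incle_length hincτ, hld]
      have hpd : psum γ ≤ psum δ := incle_psum_le hincd
      have hpτ : psum δ ≤ psum τ' := incle_psum_le hincτ
      have hsum' : (h' : ℕ) + psum τ' = psum γ + b := by
        rw [psum_cons] at hsum; omega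
      have hhb : (h' : ℕ) ≤ (b : ℕ) := by omega
      rcases lt_or_eq_of_le hhb with hlt' | heq'
      · exact nu_lt_of_klt hps (klt_head hlτ (by exact_mod_cast hlt'))
      · exfalso
        have hpτγ : psum τ' = psum γ := by omega
        have h1 : δ = τ' := incle_eq_of_psum_eq hincτ (by omega)
        have h2 : γ = δ := incle_eq_of_psum_eq hincd (by omega)
        apply hne
        have : h' = b := PNat.coe_injective heq'
        rw [this, ← h1, ← h2]

end Aux5

section Aux6

/-- The strips over `γ` of size `i`, as a finset. -/
noncomputable def stripFinset (γ : List ℕ+) (i : ℕ) : Finset (List ℕ+) :=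
  (stripSet_finite γ i).toFinset

lemma mem_stripFinset {β γ : List ℕ+} {i : ℕ} :
    β ∈ stripFinset γ i ↔ HCStrip γ β i := Set.Finite.mem_toFinset _

/-- The noncommutative Schur functions, defined by the Pieri recursion. -/
noncomputable def Sfun : List ℕ+ → NSym
  | [] => 1
  | b :: γ =>
    Hgen b * Sfun γ -
      ∑ β ∈ ((stripFinset γ (b : ℕ)).erase (b :: γ)).attach, Sfun β.1
termination_by x => nu x
decreasing_by
  · exact nu_lt_cons γ b
  · have hm := β.2
    rw [Finset.mem_erase] at hm
    exact key_lt (mem_stripFinset.mp hm.2) hm.1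

end Aux6

section Aux7

lemma Sfun_nil : Sfun [] = 1 := by rw [Sfun]

lemma Sfun_cons (b : ℕ+) (γ : List ℕ+) :
    Sfun (b :: γ) = Hgen b * Sfun γ -
      ∑ β ∈ ((stripFinset γ (b : ℕ)).erase (b :: γ)), Sfun β := by
  rw [Sfun]
  congr 1
  exact Finset.sum_attach _ _

lemma stripSet_eq_coe (α : List ℕ+) (i : ℕ) :
    {β : List ℕ+ | HCStrip α β i} = ↑(stripFinset α i) := by
  ext β
  simp [mem_stripFinset]

lemma pieri_sum_eq (S : List ℕ+ → NSym) (i : ℕ+) (α : List ℕ+) :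
    (∑ᶠ β ∈ {β : List ℕ+ | HCStrip α β (i : ℕ)}, S β) =
      S (i :: α) + ∑ β ∈ ((stripFinset α (i : ℕ)).erase (i :: α)), S β := by
  rw [stripSet_eq_coe, finsum_mem_coe_finset]
  rw [← Finset.add_sum_erase _ S (mem_stripFinset.mpr (hcstrip_cons α i))]

lemma Sfun_pieri (i : ℕ+) (α : List ℕ+) :
    Hgen i * Sfun α = ∑ᶠ β ∈ {β : List ℕ+ | HCStrip α β (i : ℕ)}, Sfun β := by
  rw [pieri_sum_eq, Sfun_cons]
  abel

lemma Sfun_pieriFamily : NCPieriFamily Sfun := ⟨Sfun_nil, Sfun_pieri⟩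

lemma pieri_unique {S : List ℕ+ → NSym} (hS : NCPieriFamily S) : S = Sfun := by
  have key : ∀ n (α : List ℕ+), nu α = n → S α = Sfun α := by
    intro n
    induction n using Nat.strong_induction_on with
    | _ n ih =>
      intro α hα
      cases α with
      | nil => rw [hS.1, Sfun_nil]
      | cons b γ =>
        have h1 := hS.2 b γ
        rw [pieri_sum_eq] at h1
        have hγ : S γ = Sfun γ := ih (nu γ) (hα ▸ nu_lt_cons γ b) γ rfl
        have hβ : ∀ β ∈ (stripFinset γ (b : ℕ)).erase (b :: γ), S β = Sfun β := by
          intro β hm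
          rw [Finset.mem_erase] at hm
          exact ih (nu β) (hα ▸ key_lt (mem_stripFinset.mp hm.2) hm.1) β rfl
        have h2 : S (b :: γ) =
            Hgen b * S γ - ∑ β ∈ ((stripFinset γ (b : ℕ)).erase (b :: γ)), S β := by
          rw [h1]; abel
        rw [h2, hγ, Finset.sum_congr rfl hβ, ← Sfun_cons]
  funext α
  exact key (nu α) α rfl

end Aux7

section Aux8

lemma HL_nil : HL [] = 1 := rfl

lemma HL_cons (b : ℕ+) (γ : List ℕ+) : HL (b :: γ) = Hgen b * HL γ := by
  simp [HL]

lemma HL_append (α β : List ℕ+) : HL (α ++ β) = HL α * HL β := by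
  simp [HL]

lemma HL_singleton (x : ℕ+) : HL [x] = FreeAlgebra.ι ℚ x := by
  simp [HL, Hgen]

lemma nu_cons_lt {δ γ : List ℕ+} (b : ℕ+) (hp : psum δ = psum γ) (h : nu δ < nu γ) :
    nu (b :: δ) < nu (b :: γ) := by
  have hne : δ ≠ γ := by rintro rfl; exact lt_irrefl _ h
  rcases klt_trichotomy hne with hk | hk
  · exact nu_lt_of_klt (by rw [psum_cons, psum_cons, hp]) (klt_cons b hk)
  · exact absurd (nu_lt_of_klt hp.symm hk) (by omega)

lemma mul_mem_span_image (b : ℕ+) {z : NSym} {s : Set NSym}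
    (hz : z ∈ Submodule.span ℚ s) :
    Hgen b * z ∈ Submodule.span ℚ ((fun x => Hgen b * x) '' s) := by
  have h1 : (LinearMap.mulLeft ℚ (Hgen b)) z ∈
      Submodule.map (LinearMap.mulLeft ℚ (Hgen b)) (Submodule.span ℚ s) :=
    Submodule.mem_map_of_mem hz
  rw [Submodule.map_span] at h1
  exact h1

/-- Triangularity of the `Sfun` family with respect to the `HL` monomials. -/
lemma Sfun_sub_HL_mem : ∀ α : List ℕ+,
    Sfun α - HL α ∈
      Submodule.span ℚ (HL '' {δ | nu δ < nu α ∧ psum δ = psum α}) := by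
  have key : ∀ n (α : List ℕ+), nu α = n →
      Sfun α - HL α ∈
        Submodule.span ℚ (HL '' {δ | nu δ < nu α ∧ psum δ = psum α}) := by
    intro n
    induction n using Nat.strong_induction_on with
    | _ n ih =>
      intro α hα
      cases α with
      | nil =>
        rw [Sfun_nil, HL_nil, sub_self]
        exact Submodule.zero_mem _
      | cons b γ =>
        have hdecomp : Sfun (b :: γ) - HL (b :: γ) =
            Hgen b * (Sfun γ - HL γ) -
              ∑ β ∈ ((stripFinset γ (b : ℕ)).erase (b :: γ)), Sfun β := by
          rw [Sfun_cons, HL_cons]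
          rw [mul_sub]
          abel
        rw [hdecomp]
        apply Submodule.sub_mem
        · -- Hgen b * (Sfun γ - HL γ)
          have hz := ih (nu γ) (hα ▸ nu_lt_cons γ b) γ rfl
          have h1 := mul_mem_span_image b hz
          apply Submodule.span_le.mpr _ h1
          rintro _ ⟨_, ⟨δ, ⟨hδ1, hδ2⟩, rfl⟩, rfl⟩
          apply Submodule.subset_span
          refine ⟨b :: δ, ⟨?_, ?_⟩, (HL_cons b δ).symm⟩
          · exact nu_cons_lt b hδ2 hδ1
          · rw [psum_cons, psum_cons, hδ2]
        · -- sum over other strips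
          apply Submodule.sum_mem
          intro β hβ
          rw [Finset.mem_erase] at hβ
          obtain ⟨hne, hmem⟩ := hβ
          have hstrip := mem_stripFinset.mp hmem
          have hnuβ : nu β < nu (b :: γ) := key_lt hstrip hne
          have hpsβ : psum β = psum (b :: γ) := by
            rw [psum_cons]
            have := hstrip.2.1
            omega
          have hz := ih (nu β) (hα ▸ hnuβ) β rfl
          have hSβ : Sfun β = HL β + (Sfun β - HL β) := by abel
          rw [hSβ]
          apply Submodule.add_mem
          · exact Submodule.subset_span ⟨β, ⟨hnuβ, hpsβ⟩, rfl⟩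
          · refine Submodule.span_le.mpr ?_ hz
            rintro _ ⟨δ, ⟨hδ1, hδ2⟩, rfl⟩
            exact Submodule.subset_span ⟨δ, ⟨lt_trans hδ1 hnuβ, hδ2.trans hpsβ⟩, rfl⟩
  exact fun α => key (nu α) α rfl

end Aux8

section Aux9

lemma span_HL_mul_closed :
    ∀ x ∈ Submodule.span ℚ (Set.range HL), ∀ y ∈ Submodule.span ℚ (Set.range HL),
      x * y ∈ Submodule.span ℚ (Set.range HL) := by
  have step1 : ∀ (α : List ℕ+), ∀ y ∈ Submodule.span ℚ (Set.range HL),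
      HL α * y ∈ Submodule.span ℚ (Set.range HL) := by
    intro α y hy
    induction hy using Submodule.span_induction with
    | mem x hx =>
      obtain ⟨β, rfl⟩ := hx
      rw [← HL_append]
      exact Submodule.subset_span ⟨α ++ β, rfl⟩
    | zero => rw [mul_zero]; exact Submodule.zero_mem _
    | add x y _ _ hx hy => rw [mul_add]; exact Submodule.add_mem _ hx hy
    | smul a x _ hx => rw [mul_smul_comm]; exact Submodule.smul_mem _ a hx
  intro x hx y hy
  induction hx using Submodule.span_induction with
  | mem x hx =>
    obtain ⟨α, rfl⟩ := hx
    exact step1 α y hy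
  | zero => rw [zero_mul]; exact Submodule.zero_mem _
  | add a b _ _ ha hb => rw [add_mul]; exact Submodule.add_mem _ ha hb
  | smul a b _ hb => rw [smul_mul_assoc]; exact Submodule.smul_mem _ a hb

lemma span_HL_top : Submodule.span ℚ (Set.range HL) = ⊤ := by
  rw [eq_top_iff]
  rintro x -
  induction x using FreeAlgebra.induction with
  | grade0 r =>
    rw [Algebra.algebraMap_eq_smul_one]
    exact Submodule.smul_mem _ r (Submodule.subset_span ⟨[], HL_nil⟩)
  | grade1 x =>
    exact Submodule.subset_span ⟨[x], HL_singleton x⟩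
  | mul a b ha hb => exact span_HL_mul_closed a ha b hb
  | add a b ha hb => exact Submodule.add_mem _ ha hb

lemma HL_mem_span_Sfun : ∀ α : List ℕ+, HL α ∈ Submodule.span ℚ (Set.range Sfun) := by
  have key : ∀ n (α : List ℕ+), nu α = n →
      HL α ∈ Submodule.span ℚ (Set.range Sfun) := by
    intro n
    induction n using Nat.strong_induction_on with
    | _ n ih =>
      intro α hα
      have h1 : HL α = Sfun α - (Sfun α - HL α) := by abel
      rw [h1]
      apply Submodule.sub_mem
      · exact Submodule.subset_span ⟨α, rfl⟩
      · refine Submodule.span_le.mpr ?_ (Sfun_sub_HL_mem α)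
        rintro _ ⟨δ, ⟨hδ1, -⟩, rfl⟩
        exact ih (nu δ) (hα ▸ hδ1) δ rfl
  exact fun α => key (nu α) α rfl

lemma span_Sfun_top : Submodule.span ℚ (Set.range Sfun) = ⊤ := by
  rw [eq_top_iff, ← span_HL_top]
  apply Submodule.span_le.mpr
  rintro _ ⟨α, rfl⟩
  exact HL_mem_span_Sfun α

/-- The algebra map to the monoid algebra of the free monoid. -/
noncomputable def Phi : NSym →ₐ[ℚ] MonoidAlgebra ℚ (FreeMonoid ℕ+) :=
  FreeAlgebra.lift ℚ (fun x => MonoidAlgebra.of ℚ (FreeMonoid ℕ+) (FreeMonoid.of x))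

lemma Phi_HL (α : List ℕ+) :
    Phi (HL α) = MonoidAlgebra.single (FreeMonoid.ofList α) 1 := by
  induction α with
  | nil =>
    rw [HL_nil, map_one]
    rfl
  | cons b γ ih =>
    rw [HL_cons, map_mul, ih]
    have hb : Phi (Hgen b) = MonoidAlgebra.single (FreeMonoid.of b) 1 := by
      simp [Phi, Hgen]
    rw [hb, MonoidAlgebra.single_mul_single, one_mul, FreeMonoid.ofList_cons]

/-- Coordinate functional at the monomial indexed by `α`. -/
noncomputable def coord (α : List ℕ+) : NSym →ₗ[ℚ] ℚ :=
  (Finsupp.lapply (FreeMonoid.ofList α)) ∘ₗ (MonoidAlgebra.coeffLinearEquiv ℚ).toLinearMap ∘ₗ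
    Phi.toLinearMap

lemma coord_HL (α δ : List ℕ+) :
    coord α (HL δ) = if δ = α then 1 else 0 := by
  classical
  have h2 : (MonoidAlgebra.single (FreeMonoid.ofList δ) (1 : ℚ)).coeff (FreeMonoid.ofList α)
      = if δ = α then (1 : ℚ) else 0 := by
    rw [MonoidAlgebra.coeff_single, Finsupp.single_apply]
    by_cases h : δ = α
    · rw [if_pos h, if_pos (by rw [h])]
    · rw [if_neg (fun hh => h (FreeMonoid.ofList.injective hh)), if_neg h]
  have h3 : coord α (HL δ)
      = (MonoidAlgebra.single (FreeMonoid.ofList δ) (1 : ℚ)).coeff (FreeMonoid.ofList α) := by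
    show (Phi (HL δ)).coeff (FreeMonoid.ofList α) = _
    rw [Phi_HL]
  exact h3.trans h2

lemma coord_zero_of_mem_span {α : List ℕ+} {s : Set NSym} {x : NSym}
    (hs : ∀ y ∈ s, coord α y = 0) (hx : x ∈ Submodule.span ℚ s) : coord α x = 0 := by
  induction hx using Submodule.span_induction with
  | mem y hy => exact hs y hy
  | zero => exact map_zero _
  | add a b _ _ ha hb => rw [map_add, ha, hb, add_zero]
  | smul a b _ hb => rw [map_smul, hb, smul_zero]

lemma coord_Sfun {α β : List ℕ+} (h : nu β ≤ nu α) :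
    coord α (Sfun β) = if β = α then 1 else 0 := by
  have h1 : Sfun β = HL β + (Sfun β - HL β) := by abel
  rw [h1, map_add, coord_HL]
  have h2 : coord α (Sfun β - HL β) = 0 := by
    apply coord_zero_of_mem_span _ (Sfun_sub_HL_mem β)
    rintro _ ⟨δ, ⟨hδ1, -⟩, rfl⟩
    rw [coord_HL]
    have : δ ≠ α := by
      rintro rfl
      omega
    simp [this]
  rw [h2, add_zero]

lemma Sfun_linearIndependent : LinearIndependent ℚ Sfun := by
  rw [linearIndependent_iff]
  intro l hl
  by_contra hne
  obtain ⟨α, hαmem, hαmax⟩ :=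
    Finset.exists_max_image l.support nu (Finsupp.support_nonempty_iff.mpr hne)
  have hexp : Finsupp.linearCombination ℚ Sfun l = ∑ β ∈ l.support, l β • Sfun β := by
    rw [Finsupp.linearCombination_apply, Finsupp.sum]
  have h0 : coord α (Finsupp.linearCombination ℚ Sfun l) = 0 := by
    rw [hl, map_zero]
  rw [hexp, map_sum] at h0
  have hterm : ∀ β ∈ l.support, coord α (l β • Sfun β) = if β = α then l β else 0 := by
    intro β hβ
    rw [map_smul, coord_Sfun (hαmax β hβ)]
    by_cases h : β = α <;> simp [h]
  rw [Finset.sum_congr rfl hterm, Finset.sum_ite_eq' l.support α (fun β => l β),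
    if_pos hαmem] at h0
  exact (Finsupp.mem_support_iff.mp hαmem) h0

end Aux9
/-- There exists a unique family `{S_α}` in `NSym`, indexed by
compositions, with `S_∅ = 1`, satisfying the noncommutative Pieri rule; moreover, any such
family is a ℚ-basis of `NSym`. -/
theorem ncschur_existsUnique_and_basis :
    (∃! S : List ℕ+ → NSym, NCPieriFamily S) ∧
      ∀ S : List ℕ+ → NSym, NCPieriFamily S →
        LinearIndependent ℚ S ∧ Submodule.span ℚ (Set.range S) = ⊤ := by
  constructor
  · exact ⟨Sfun, Sfun_pieriFamily, fun S hS => pieri_unique hS⟩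
  · intro S hS
    rw [pieri_unique hS]
    exact ⟨Sfun_linearIndependent, span_Sfun_top⟩
end

section
/- Fix an integer k ≥ 1. The ℚ-linear span of the monomial symmetric functions m_λ over all partitions λ having a part greater than k is an ideal of the algebra of symmetric power series (the span of all m_λ); consequently, the quotient Sym^(k) is a ℚ-algebra and the images of {m_λ : λ is k-bounded} form a ℚ-basis of Sym^(k). -/
/-- The algebra of symmetric power series: the ℚ-span of the monomial symmetric
functions `m_λ`. -/
noncomputable def SymPSSub : Submodule ℚ PS := Submodule.span ℚ (Set.range mPS)

/-- The ℚ-span of the monomial symmetric functions `m_λ` over all partitions `λ` having a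
part greater than `k`. -/
noncomputable def badP (k : ℕ) : Submodule ℚ PS :=
  Submodule.span ℚ (mPS '' {lam : Ptn | ¬ kBddP k lam})

/-- The quotient `Sym^(k)` of the algebra of symmetric power series by the span of the
non-`k`-bounded monomial symmetric functions. -/
abbrev SymQuot (k : ℕ) : Type :=
  SymPSSub ⧸ Submodule.comap SymPSSub.subtype (badP k)

/-- The image of `m_λ` in the quotient `Sym^(k)`. -/
noncomputable def mQuot (k : ℕ) (lam : Ptn) : SymQuot k :=
  Submodule.Quotient.mk ⟨mPS lam, Submodule.subset_span (Set.mem_range_self lam)⟩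
/-! ## Auxiliary machinery -/

open Finsupp MvPowerSeries

noncomputable section

/-- Normalized coercion of a list of positive naturals. -/
def nmap (l : List ℕ+) : List ℕ := l.map fun p => (p : ℕ)

lemma nmap_eq (l : List ℕ+) : nmap l = List.map (fun p : ℕ+ => (p : ℕ)) l := by
  induction l with
  | nil => rfl
  | cons a t ih => simpa [nmap] using congrArg (List.cons a.val) ih

lemma pget_eq (l : List ℕ+) (i : ℕ) : pget l i = (nmap l).getD i 0 := rfl

lemma psum_eq (l : List ℕ+) : psum l = (nmap l).sum := rfl

/-- The multiset of (nonzero) values of a monomial `d`. -/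
def vms (d : ℕ →₀ ℕ) : Multiset ℕ := d.support.val.map d

/-- The multiset of parts of a list of positive integers. -/
def pms (l : List ℕ+) : Multiset ℕ := ↑(List.map (fun p : ℕ+ => (p : ℕ)) l)

lemma pms_sum (l : List ℕ+) : (pms l).sum = psum l := by
  rw [pms, Multiset.sum_coe, psum_eq, nmap_eq]

lemma coe_elist (d : ℕ →₀ ℕ) :
    (((d.support.sort (· ≤ ·)).map d : List ℕ) : Multiset ℕ) = vms d := by
  rw [← Multiset.map_coe, Finset.sort_eq]
  rfl

lemma vms_pos {d : ℕ →₀ ℕ} {x : ℕ} (hx : x ∈ vms d) : 0 < x := by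
  rcases Multiset.mem_map.mp hx with ⟨j, hj, rfl⟩
  exact Nat.pos_of_ne_zero (Finsupp.mem_support_iff.mp hj)

lemma vms_sum (d : ℕ →₀ ℕ) : (vms d).sum = d.sum fun _ n => n := rfl

lemma mPS_eq_sum (μ : Ptn) :
    mPS μ = ∑ α ∈ μ.1.permutations.toFinset, Mqs α := by
  rw [mPS, ← finsum_mem_coe_finset]
  congr 1
  ext α
  simp [List.mem_permutations]

lemma coeff_Mqs (α : List ℕ+) (d : ℕ →₀ ℕ) :
    coeff d (Mqs α) =
      if ((d.support.sort (· ≤ ·)).map d : List ℕ) = nmap α then 1 else 0 := rfl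

lemma coeff_mPS (μ : Ptn) (d : ℕ →₀ ℕ) :
    coeff d (mPS μ) = if vms d = pms μ.1 then 1 else 0 := by
  rw [mPS_eq_sum, map_sum]
  by_cases h : vms d = pms μ.1
  · rw [if_pos h]
    set L := ((d.support.sort (· ≤ ·)).map d : List ℕ) with hL
    have hLperm : L.Perm (List.map (fun p : ℕ+ => (p : ℕ)) μ.1) := by
      rw [← Multiset.coe_eq_coe, coe_elist, h, pms]
    have hLpos : ∀ x ∈ L, 0 < x := by
      intro x hx
      apply vms_pos (d := d)
      rw [← coe_elist]
      exact Multiset.mem_coe.mpr hx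
    set α₀ : List ℕ+ := L.pmap (fun x hx => (⟨x, hx⟩ : ℕ+)) hLpos with hα₀
    have hα₀L : List.map (fun p : ℕ+ => (p : ℕ)) α₀ = L := by
      rw [hα₀]
      exact (List.map_pmap hLpos).trans ((List.pmap_eq_map (f := fun x : ℕ => x) (l := L) hLpos).trans (List.map_id L))
    have hα₀perm : α₀.Perm μ.1 := by
      rw [← Multiset.coe_eq_coe]
      apply Multiset.map_injective (f := fun p : ℕ+ => (p : ℕ)) PNat.coe_injective
      rw [Multiset.map_coe, Multiset.map_coe, hα₀L]
      exact Multiset.coe_eq_coe.mpr hLperm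
    have hmem : α₀ ∈ μ.1.permutations.toFinset := by
      simp [List.mem_permutations, hα₀perm]
    have hcond : ∀ α : List ℕ+, (L = nmap α) ↔ α = α₀ := by
      intro α
      rw [nmap_eq]
      constructor
      · intro hEq
        apply List.map_injective_iff.mpr PNat.coe_injective
        rw [hα₀L, ← hEq]
      · rintro rfl
        rw [hα₀L]
    calc (∑ α ∈ μ.1.permutations.toFinset, coeff d (Mqs α))
        = ∑ α ∈ μ.1.permutations.toFinset, if α = α₀ then (1:ℚ) else 0 := by
          apply Finset.sum_congr rfl
          intro α _
          rw [coeff_Mqs, ← hL]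
          simp only [hcond α]
      _ = 1 := by rw [Finset.sum_ite_eq' _ α₀ (fun _ => (1:ℚ)), if_pos hmem]
  · rw [if_neg h]
    apply Finset.sum_eq_zero
    intro α hα
    rw [coeff_Mqs, if_neg]
    intro hEq
    apply h
    have hαperm : α.Perm μ.1 := List.mem_permutations.mp (List.mem_toFinset.mp hα)
    rw [← coe_elist, hEq, nmap_eq, pms]
    exact Multiset.coe_eq_coe.mpr (hαperm.map _)
lemma pget_eq_zero_iff {l : List ℕ+} {i : ℕ} : pget l i = 0 ↔ l.length ≤ i := by
  rw [pget_eq, nmap_eq]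
  constructor
  · intro h
    by_contra hlt
    push_neg at hlt
    have hlt' : i < (List.map (fun p : ℕ+ => (p : ℕ)) l).length := by simpa using hlt
    rw [List.getD_eq_getElem _ _ hlt'] at h
    rw [List.getElem_map] at h
    exact (l[i].pos).ne' h
  · intro h
    apply List.getD_eq_default
    simpa using h

lemma pget_lt {l : List ℕ+} {i : ℕ} (h : i < l.length) :
    pget l i = (l.get ⟨i, h⟩ : ℕ) := by
  rw [pget_eq, nmap_eq, List.getD_eq_getElem _ _ (by simpa using h), List.getElem_map]
  rfl

/-- The canonical monomial with exponents `lam`. -/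
def dOf (lam : Ptn) : ℕ →₀ ℕ :=
  Finsupp.onFinset (Finset.range lam.1.length) (fun i => pget lam.1 i)
    (fun i h => Finset.mem_range.mpr (by by_contra hc; exact h (pget_eq_zero_iff.mpr (le_of_not_gt hc))))

lemma dOf_apply (lam : Ptn) (i : ℕ) : dOf lam i = pget lam.1 i := rfl

lemma support_dOf (lam : Ptn) : (dOf lam).support = Finset.range lam.1.length := by
  ext i
  rw [Finsupp.mem_support_iff, dOf_apply, Finset.mem_range]
  constructor
  · intro h
    by_contra hc
    exact h (pget_eq_zero_iff.mpr (le_of_not_gt hc))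
  · intro h h0
    exact absurd (pget_eq_zero_iff.mp h0) (not_le.mpr h)

lemma map_getD_range (L : List ℕ) :
    (List.range L.length).map (fun i => L.getD i 0) = L := by
  apply List.ext_getElem
  · simp
  · intro i h1 h2
    simp [List.getD_eq_getElem, List.getElem?_eq_getElem, h2]

lemma vms_dOf (lam : Ptn) : vms (dOf lam) = pms lam.1 := by
  rw [vms, support_dOf, pms]
  have : (Finset.range lam.1.length).val = ↑(List.range lam.1.length) := rfl
  rw [this, Multiset.map_coe]
  apply congrArg Multiset.ofList
  have hlen : lam.1.length = (List.map (fun p : ℕ+ => (p : ℕ)) lam.1).length := by simp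
  calc List.map (⇑(dOf lam)) (List.range lam.1.length)
      = List.map (fun i => (List.map (fun p : ℕ+ => (p : ℕ)) lam.1).getD i 0)
          (List.range (List.map (fun p : ℕ+ => (p : ℕ)) lam.1).length) := by
        rw [← hlen]
        apply List.map_congr_left
        intro i _
        rw [dOf_apply, pget_eq, nmap_eq]
    _ = List.map (fun p : ℕ+ => (p : ℕ)) lam.1 := map_getD_range _

lemma sorted_coe (lam : Ptn) :
    (List.map (fun p : ℕ+ => (p : ℕ)) lam.1).Pairwise (· ≥ ·) :=
  List.Pairwise.map _ (fun {a b} (h : a ≥ b) => (PNat.coe_le_coe _ _).mpr h) lam.2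

lemma pms_inj {lam μ : Ptn} (h : pms lam.1 = pms μ.1) : lam = μ := by
  apply Subtype.ext
  apply List.map_injective_iff.mpr PNat.coe_injective
  apply List.Perm.eq_of_pairwise' (sorted_coe lam) (sorted_coe μ) (Multiset.coe_eq_coe.mp h)

lemma coeff_mPS_dOf (lam μ : Ptn) :
    coeff (dOf lam) (mPS μ) = if lam = μ then 1 else 0 := by
  rw [coeff_mPS, vms_dOf]
  by_cases h : lam = μ
  · rw [if_pos h, if_pos (by rw [h])]
  · rw [if_neg h, if_neg (fun hc => h (pms_inj hc))]
lemma eqmd_apply (σ : Equiv.Perm ℕ) (d : ℕ →₀ ℕ) (j : ℕ) :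
    Finsupp.equivMapDomain σ d j = d (σ.symm j) := rfl

lemma vms_eqmd (σ : Equiv.Perm ℕ) (d : ℕ →₀ ℕ) :
    vms (Finsupp.equivMapDomain σ d) = vms d := by
  rw [vms, vms]
  have hsupp : (Finsupp.equivMapDomain σ d).support = d.support.map σ.toEmbedding := rfl
  rw [hsupp, Finset.map_val, Multiset.map_map]
  apply Multiset.map_congr rfl
  intro j _
  show Finsupp.equivMapDomain σ d (σ j) = d j
  rw [eqmd_apply, Equiv.symm_apply_apply]

lemma eqmd_add (σ : Equiv.Perm ℕ) (a b : ℕ →₀ ℕ) :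
    Finsupp.equivMapDomain σ (a + b) =
      Finsupp.equivMapDomain σ a + Finsupp.equivMapDomain σ b := by
  ext j
  simp [eqmd_apply]

lemma eqmd_cancel (σ : Equiv.Perm ℕ) (d : ℕ →₀ ℕ) :
    Finsupp.equivMapDomain σ (Finsupp.equivMapDomain σ.symm d) = d := by
  rw [← Finsupp.equivMapDomain_trans, Equiv.symm_trans_self, Finsupp.equivMapDomain_refl]

lemma eqmd_cancel' (σ : Equiv.Perm ℕ) (d : ℕ →₀ ℕ) :
    Finsupp.equivMapDomain σ.symm (Finsupp.equivMapDomain σ d) = d := by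
  rw [← Finsupp.equivMapDomain_trans, Equiv.self_trans_symm, Finsupp.equivMapDomain_refl]

lemma deg_eqmd (σ : Equiv.Perm ℕ) (d : ℕ →₀ ℕ) :
    ((Finsupp.equivMapDomain σ d).sum fun _ n => n) = d.sum fun _ n => n := by
  rw [← vms_sum, ← vms_sum, vms_eqmd]

/-- Every monomial is obtained from a canonical one by permuting the variables. -/
lemma exists_sigma (d : ℕ →₀ ℕ) :
    ∃ (lam : Ptn) (σ : Equiv.Perm ℕ), Finsupp.equivMapDomain σ (dOf lam) = d := by
  classical
  set l : List ℕ := (d.support.sort (· ≤ ·)).mergeSort (fun a b => decide (d b ≤ d a)) with hl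
  have hperm : l.Perm (d.support.sort (· ≤ ·)) := List.mergeSort_perm _ _
  have hmem : ∀ j, j ∈ l ↔ j ∈ d.support := by
    intro j
    rw [hperm.mem_iff, Finset.mem_sort]
  have hnd : l.Nodup := hperm.symm.nodup (Finset.sort_nodup _ _)
  have hsort : l.Pairwise (fun a b => d b ≤ d a) := by
    have := List.pairwise_mergeSort (le := fun a b => decide (d b ≤ d a))
      (fun a b c h1 h2 => by simp only [decide_eq_true_eq] at *; omega)
      (fun a b => by simp only [Bool.or_eq_true, decide_eq_true_eq]; omega)
      (d.support.sort (· ≤ ·))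
    rw [← hl] at this
    exact this.imp (fun h => by simpa using h)
  have hpos : ∀ j ∈ l, 0 < d j := fun j hj =>
    Nat.pos_of_ne_zero (Finsupp.mem_support_iff.mp ((hmem j).mp hj))
  set P : List ℕ+ := l.pmap (fun j h => (⟨d j, h⟩ : ℕ+)) hpos with hP
  have hPlen : P.length = l.length := by rw [hP]; exact List.length_pmap
  have hPcoe : List.map (fun p : ℕ+ => (p : ℕ)) P = List.map d l := by
    rw [hP]
    exact (List.map_pmap hpos).trans (List.pmap_eq_map hpos)
  have hPsorted : P.Pairwise (· ≥ ·) := by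
    rw [hP]
    exact List.Pairwise.pmap hsort _ (fun a ha b hb h => (PNat.coe_le_coe _ _).mp h)
  set lam : Ptn := ⟨P, hPsorted⟩ with hlam
  set m := l.length with hm
  -- the bijection on {x | x ∈ Finset.range m}
  let e₁ : {x // x ∈ Finset.range m} ≃ Fin m :=
    { toFun := fun x => ⟨x.1, Finset.mem_range.mp x.2⟩
      invFun := fun i => ⟨i.1, Finset.mem_range.mpr i.2⟩
      left_inv := fun x => rfl
      right_inv := fun i => rfl }
  let e₂ : Fin m ≃ {x // x ∈ l} := List.Nodup.getEquiv l hnd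
  let e₃ : {x // x ∈ l} ≃ {x // x ∈ d.support} := Equiv.subtypeEquivRight hmem
  let eA : {x // x ∈ Finset.range m} ≃ {x // x ∈ d.support} := e₁.trans (e₂.trans e₃)
  -- the bijection on the complements
  haveI h1 : Infinite ↥{x : ℕ | x ∉ Finset.range m} := by
    apply Set.infinite_coe_iff.mpr
    exact Set.Finite.infinite_compl (Finset.range m).finite_toSet
  haveI h2 : Infinite ↥{x : ℕ | x ∉ d.support} := by
    apply Set.infinite_coe_iff.mpr
    exact Set.Finite.infinite_compl d.support.finite_toSet
  haveI d1 : Denumerable {x : ℕ // x ∉ Finset.range m} :=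
    Nat.Subtype.denumerable {x : ℕ | x ∉ Finset.range m}
  haveI d2 : Denumerable {x : ℕ // x ∉ d.support} :=
    Nat.Subtype.denumerable {x : ℕ | x ∉ d.support}
  let eB : {x // x ∉ Finset.range m} ≃ {x // x ∉ d.support} :=
    (Denumerable.eqv _).trans (Denumerable.eqv _).symm
  let σ : Equiv.Perm ℕ :=
    (Equiv.sumCompl (· ∈ Finset.range m)).symm.trans
      ((eA.sumCongr eB).trans (Equiv.sumCompl (· ∈ d.support)))
  have hσ_pos : ∀ (i : ℕ) (h : i ∈ Finset.range m), σ i = (eA ⟨i, h⟩ : ℕ) := by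
    intro i h
    show (Equiv.sumCompl (· ∈ d.support))
      ((eA.sumCongr eB) ((Equiv.sumCompl (· ∈ Finset.range m)).symm i)) = _
    rw [Equiv.sumCompl_symm_apply_of_pos h]
    rfl
  have hσ_neg : ∀ (i : ℕ) (h : i ∉ Finset.range m), σ i ∉ d.support := by
    intro i h
    show (Equiv.sumCompl (· ∈ d.support))
      ((eA.sumCongr eB) ((Equiv.sumCompl (· ∈ Finset.range m)).symm i)) ∉ _
    rw [Equiv.sumCompl_symm_apply_of_neg h]
    exact (eB ⟨i, h⟩).2
  have key : ∀ i, dOf lam i = d (σ i) := by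
    intro i
    by_cases h : i ∈ Finset.range m
    · rw [hσ_pos i h]
      have hi : i < m := Finset.mem_range.mp h
      have heA : (eA ⟨i, h⟩ : ℕ) = l.get ⟨i, hi⟩ := rfl
      rw [heA, dOf_apply, pget_eq, nmap_eq, hPcoe]
      have hilen : i < (List.map d l).length := by simpa using hi
      rw [List.getD_eq_getElem _ _ hilen, List.getElem_map]
      rfl
    · have h1 : dOf lam i = 0 := by
        apply Finsupp.notMem_support_iff.mp
        rw [support_dOf]
        show i ∉ Finset.range P.length
        rwa [hPlen]
      have h2 : d (σ i) = 0 := Finsupp.notMem_support_iff.mp (hσ_neg i h)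
      rw [h1, h2]
  refine ⟨lam, σ, ?_⟩
  ext j
  rw [eqmd_apply, key (σ.symm j), Equiv.apply_symm_apply]
/-- Symmetric power series of bounded degree. -/
def IsSym (f : PS) : Prop :=
  (∀ (σ : Equiv.Perm ℕ) (d : ℕ →₀ ℕ),
      coeff (Finsupp.equivMapDomain σ d) f = coeff d f) ∧
    ∃ N, ∀ d : ℕ →₀ ℕ, N < (d.sum fun _ n => n) → coeff d f = 0

lemma isSym_zero : IsSym 0 := ⟨fun _ _ => by simp, 0, fun _ _ => by simp⟩

lemma IsSym.add {f g : PS} (hf : IsSym f) (hg : IsSym g) : IsSym (f + g) := by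
  obtain ⟨hf1, Nf, hf2⟩ := hf
  obtain ⟨hg1, Ng, hg2⟩ := hg
  refine ⟨fun σ d => by simp [map_add, hf1, hg1], max Nf Ng, fun d hd => ?_⟩
  rw [map_add, hf2 d (lt_of_le_of_lt (le_max_left _ _) hd),
    hg2 d (lt_of_le_of_lt (le_max_right _ _) hd), add_zero]

lemma IsSym.smul {f : PS} (c : ℚ) (hf : IsSym f) : IsSym (c • f) := by
  obtain ⟨hf1, Nf, hf2⟩ := hf
  exact ⟨fun σ d => by simp [hf1], Nf, fun d hd => by simp [hf2 d hd]⟩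

lemma IsSym.mul {f g : PS} (hf : IsSym f) (hg : IsSym g) : IsSym (f * g) := by
  classical
  obtain ⟨hf1, Nf, hf2⟩ := hf
  obtain ⟨hg1, Ng, hg2⟩ := hg
  constructor
  · intro σ d
    rw [MvPowerSeries.coeff_mul, MvPowerSeries.coeff_mul]
    apply Finset.sum_nbij'
      (i := fun p => (Finsupp.equivMapDomain σ.symm p.1, Finsupp.equivMapDomain σ.symm p.2))
      (j := fun p => (Finsupp.equivMapDomain σ p.1, Finsupp.equivMapDomain σ p.2))
    · intro p hp
      rw [Finset.HasAntidiagonal.mem_antidiagonal] at hp ⊢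
      rw [← eqmd_add, hp, eqmd_cancel']
    · intro p hp
      rw [Finset.HasAntidiagonal.mem_antidiagonal] at hp ⊢
      rw [← eqmd_add, hp]
    · intro p _
      simp [eqmd_cancel]
    · intro p _
      simp [eqmd_cancel']
    · intro p _
      have e1 : coeff p.1 f = coeff (Finsupp.equivMapDomain σ.symm p.1) f := by
        rw [hf1 σ.symm]
      have e2 : coeff p.2 g = coeff (Finsupp.equivMapDomain σ.symm p.2) g := by
        rw [hg1 σ.symm]
      rw [e1, e2]
  · refine ⟨Nf + Ng, fun d hd => ?_⟩
    rw [MvPowerSeries.coeff_mul]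
    apply Finset.sum_eq_zero
    intro p hp
    rw [Finset.HasAntidiagonal.mem_antidiagonal] at hp
    have hdeg : (p.1.sum fun _ n => n) + (p.2.sum fun _ n => n) = d.sum fun _ n => n := by
      rw [← hp]
      exact (Finsupp.sum_add_index' (fun _ => rfl) (fun _ _ _ => rfl)).symm
    by_cases h1 : Nf < p.1.sum fun _ n => n
    · rw [hf2 p.1 h1, zero_mul]
    · have h2 : Ng < p.2.sum fun _ n => n := by push_neg at h1; omega
      rw [hg2 p.2 h2, mul_zero]

lemma isSym_mPS (μ : Ptn) : IsSym (mPS μ) := by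
  constructor
  · intro σ d
    rw [coeff_mPS, coeff_mPS, vms_eqmd]
  · refine ⟨psum μ.1, fun d hd => ?_⟩
    rw [coeff_mPS, if_neg]
    intro hc
    rw [← vms_sum, hc, pms_sum] at hd
    exact lt_irrefl _ hd

lemma isSym_of_mem {f : PS} (hf : f ∈ SymPSSub) : IsSym f := by
  refine Submodule.span_induction ?_ isSym_zero (fun _ _ _ _ => IsSym.add)
    (fun c _ _ h => IsSym.smul c h) hf
  rintro _ ⟨μ, rfl⟩
  exact isSym_mPS μ

/-- Partitions of bounded size form a finite set. -/
lemma finPtn (N : ℕ) : {lam : Ptn | psum lam.1 ≤ N}.Finite := by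
  classical
  have hinj : Set.InjOn (fun lam : Ptn => pms lam.1) {lam : Ptn | psum lam.1 ≤ N} :=
    fun a _ b _ h => pms_inj h
  apply Set.Finite.of_finite_image ?_ hinj
  have hsub : (fun lam : Ptn => pms lam.1) '' {lam : Ptn | psum lam.1 ≤ N} ⊆
      {s : Multiset ℕ | s.sum ≤ N ∧ ∀ x ∈ s, 0 < x} := by
    rintro _ ⟨lam, hlam, rfl⟩
    refine ⟨by rw [pms_sum]; exact hlam, ?_⟩
    intro x hx
    have hx' : x ∈ (↑(List.map (fun p : ℕ+ => (p : ℕ)) lam.1) : Multiset ℕ) := hx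
    rcases List.mem_map.mp (Multiset.mem_coe.mp hx') with ⟨p, _, rfl⟩
    exact p.pos
  apply Set.Finite.subset ?_ hsub
  have hcover : {s : Multiset ℕ | s.sum ≤ N ∧ ∀ x ∈ s, 0 < x} ⊆
      ⋃ n ∈ Finset.range (N + 1), Set.range (fun p : n.Partition => p.parts) := by
    rintro s ⟨hsum, hpos⟩
    apply Set.mem_biUnion (Finset.mem_coe.mpr (Finset.mem_range.mpr (Nat.lt_succ_of_le hsum)))
    exact ⟨⟨s, fun {x} hx => hpos x hx, rfl⟩, rfl⟩
  apply Set.Finite.subset ?_ hcover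
  apply Set.Finite.biUnion (Finset.range (N + 1)).finite_toSet
  intro n _
  exact Set.finite_range _

/-- The decomposition of a symmetric bounded power series over monomial symmetric
functions, with control on which partitions appear. -/
lemma mem_span_of_isSym {f : PS} (hf : IsSym f) :
    f ∈ Submodule.span ℚ (mPS '' {lam : Ptn | coeff (dOf lam) f ≠ 0}) := by
  classical
  obtain ⟨hsym, N, hN⟩ := hf
  set A := {lam : Ptn | coeff (dOf lam) f ≠ 0} with hA
  set T := (finPtn N).toFinset with hT
  have hdecomp : f = ∑ lam ∈ T, (coeff (dOf lam) f) • mPS lam := by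
    apply MvPowerSeries.ext
    intro d
    obtain ⟨ld, σ, hσ⟩ := exists_sigma d
    have hv : vms d = pms ld.1 := by rw [← hσ, vms_eqmd, vms_dOf]
    have hfd : coeff d f = coeff (dOf ld) f := by rw [← hσ, hsym]
    have hdeg : (d.sum fun _ n => n) = psum ld.1 := by
      rw [← vms_sum, hv, pms_sum]
    have hrhs : coeff d (∑ lam ∈ T, (coeff (dOf lam) f) • mPS lam) =
        if ld ∈ T then coeff (dOf ld) f else 0 := by
      rw [map_sum]
      have : ∀ lam ∈ T, coeff d ((coeff (dOf lam) f) • mPS lam) =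
          if lam = ld then coeff (dOf lam) f else 0 := by
        intro lam _
        rw [map_smul, smul_eq_mul, coeff_mPS, hv]
        by_cases h : lam = ld
        · rw [if_pos (by rw [h]), if_pos h, mul_one]
        · rw [if_neg (fun hc => h (pms_inj hc.symm)), if_neg h, mul_zero]
      rw [Finset.sum_congr rfl this, Finset.sum_ite_eq' T ld (fun lam => coeff (dOf lam) f)]
    rw [hrhs]
    by_cases hld : ld ∈ T
    · rw [if_pos hld, hfd]
    · rw [if_neg hld]
      apply hN
      rw [hdeg]
      rcases lt_or_ge N (psum ld.1) with h | h
      · exact h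
      · exact absurd (by rw [hT, Set.Finite.mem_toFinset]; exact h) hld
  rw [hdecomp]
  apply Submodule.sum_mem
  intro lam _
  by_cases h : coeff (dOf lam) f = 0
  · rw [h, zero_smul]; exact Submodule.zero_mem _
  · exact Submodule.smul_mem _ _ (Submodule.subset_span ⟨lam, by rw [hA]; exact h, rfl⟩)
lemma mem_SymPSSub_of_isSym {f : PS} (hf : IsSym f) : f ∈ SymPSSub := by
  apply Submodule.span_mono (Set.image_subset_range mPS _) (mem_span_of_isSym hf)

lemma badP_le_SymPSSub (k : ℕ) : badP k ≤ SymPSSub :=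
  Submodule.span_mono (Set.image_subset_range mPS _)

lemma bad_coeff {k : ℕ} {g : PS} (hg : g ∈ badP k) :
    ∀ d : ℕ →₀ ℕ, coeff d g ≠ 0 → ∃ x ∈ vms d, k < x := by
  refine Submodule.span_induction ?_ ?_ ?_ ?_ hg
  · rintro _ ⟨μ, hμ, rfl⟩ d hd
    rw [coeff_mPS] at hd
    have hv : vms d = pms μ.1 := by
      by_contra hc
      rw [if_neg hc] at hd
      exact hd rfl
    have hμ' : ¬ ∀ p ∈ μ.1, (p : ℕ) ≤ k := hμ
    push_neg at hμ'
    replace hμ := hμ'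
    obtain ⟨p, hp, hpk⟩ := hμ
    refine ⟨(p : ℕ), ?_, hpk⟩
    rw [hv, pms]
    exact Multiset.mem_coe.mpr (List.mem_map.mpr ⟨p, hp, rfl⟩)
  · intro d hd
    exact absurd (map_zero _) hd
  · intro a b _ _ ha hb d hd
    rw [map_add] at hd
    by_cases h : coeff d a = 0
    · exact hb d (by intro hc; apply hd; rw [h, hc, add_zero])
    · exact ha d h
  · intro c a _ ha d hd
    rw [map_smul, smul_eq_mul] at hd
    exact ha d (right_ne_zero_of_mul hd)

lemma mul_bad {k : ℕ} {f g : PS} (hf : IsSym f) (hg : g ∈ badP k) : f * g ∈ badP k := by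
  have hgs : IsSym g := isSym_of_mem (badP_le_SymPSSub k hg)
  have h1 : IsSym (f * g) := hf.mul hgs
  have h2 := mem_span_of_isSym h1
  refine Submodule.span_mono (Set.image_mono ?_) h2
  intro ν hν
  rw [Set.mem_setOf_eq] at hν
  rw [MvPowerSeries.coeff_mul] at hν
  obtain ⟨p, hp, hne⟩ := Finset.exists_ne_zero_of_sum_ne_zero hν
  rw [Finset.HasAntidiagonal.mem_antidiagonal] at hp
  have hg2 : coeff p.2 g ≠ 0 := right_ne_zero_of_mul hne
  obtain ⟨x, hx, hxk⟩ := bad_coeff hg p.2 hg2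
  obtain ⟨j, hj, rfl⟩ := Multiset.mem_map.mp hx
  have hj2 : p.2 j ≤ dOf ν j := by
    have : dOf ν j = p.1 j + p.2 j := by rw [← hp]; rfl
    omega
  have hνj : k < dOf ν j := lt_of_lt_of_le hxk hj2
  have hνjne : dOf ν j ≠ 0 := by omega
  rw [dOf_apply] at hνj hνjne
  have hlt : j < ν.1.length := by
    by_contra hc
    exact hνjne (pget_eq_zero_iff.mpr (le_of_not_gt hc))
  rw [pget_lt hlt] at hνj
  intro hbdd
  exact absurd (hbdd _ (ν.1.get_mem ⟨j, hlt⟩)) (not_le.mpr hνj)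
lemma main_li (k : ℕ) :
    LinearIndependent ℚ fun lam : {lam : Ptn // kBddP k lam} => mQuot k lam.1 := by
  classical
  rw [linearIndependent_iff]
  intro l hl
  set Nsub := Submodule.comap SymPSSub.subtype (badP k) with hNsub
  set u : {lam : Ptn // kBddP k lam} → SymPSSub :=
    fun i => ⟨mPS i.1, Submodule.subset_span (Set.mem_range_self i.1)⟩ with hu
  have hl' : Submodule.mkQ Nsub (Finsupp.linearCombination ℚ u l) = 0 := by
    rw [Finsupp.apply_linearCombination]
    exact hl
  have hmem : (Finsupp.linearCombination ℚ u l) ∈ Nsub := by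
    rwa [← Submodule.Quotient.mk_eq_zero, ← Submodule.mkQ_apply]
  have hw : (Finsupp.linearCombination ℚ (fun i : {lam : Ptn // kBddP k lam} => mPS i.1) l)
      ∈ badP k := by
    have h2 := Submodule.mem_comap.mp hmem
    rwa [Finsupp.apply_linearCombination] at h2
  ext i₀
  have hker : badP k ≤ LinearMap.ker (coeff (dOf i₀.1)) := by
    rw [badP, Submodule.span_le]
    rintro _ ⟨μ, hμ, rfl⟩
    rw [SetLike.mem_coe, LinearMap.mem_ker, coeff_mPS_dOf, if_neg]
    intro hc
    exact hμ (by rw [← hc]; exact i₀.2)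
  have h0 : coeff (dOf i₀.1) (Finsupp.linearCombination ℚ
      (fun i : {lam : Ptn // kBddP k lam} => mPS i.1) l) = 0 :=
    LinearMap.mem_ker.mp (hker hw)
  rw [Finsupp.apply_linearCombination, Finsupp.linearCombination_apply] at h0
  have hsum : (l.sum fun i c => c • coeff (dOf i₀.1) (mPS i.1)) = l i₀ := by
    have : ∀ (i : {lam : Ptn // kBddP k lam}) (c : ℚ),
        c • coeff (dOf i₀.1) (mPS i.1) = if i = i₀ then c else 0 := by
      intro i c
      rw [coeff_mPS_dOf]
      by_cases h : i = i₀
      · rw [if_pos (by rw [h]), if_pos h, smul_eq_mul, mul_one]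
      · rw [if_neg (fun hc => h (Subtype.ext hc.symm)), if_neg h, smul_eq_mul, mul_zero]
    have hcongr : (l.sum fun i c => c • coeff (dOf i₀.1) (mPS i.1)) =
        l.sum (fun i c => if i = i₀ then c else 0) :=
      Finsupp.sum_congr (fun i _ => this i (l i))
    rw [hcongr, Finsupp.sum_ite_eq' l i₀ (fun _ c => c)]
    by_cases h : i₀ ∈ l.support
    · rw [if_pos h]
    · rw [if_neg h, (Finsupp.notMem_support_iff.mp h)]
  have h0' : (l.sum fun i c => c • coeff (dOf i₀.1) (mPS i.1)) = 0 := by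
    simpa using h0
  rw [Finsupp.coe_zero, Pi.zero_apply, ← hsum]
  exact h0'

lemma main_span (k : ℕ) :
    Submodule.span ℚ
      (Set.range fun lam : {lam : Ptn // kBddP k lam} => mQuot k lam.1) = ⊤ := by
  classical
  rw [eq_top_iff]
  rintro y -
  obtain ⟨x, rfl⟩ := Submodule.Quotient.mk_surjective _ y
  set Nsub := Submodule.comap SymPSSub.subtype (badP k) with hNsub
  set V := Submodule.span ℚ
    (Set.range fun lam : {lam : Ptn // kBddP k lam} => mQuot k lam.1) with hV
  obtain ⟨xv, hxv⟩ := x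
  show (Submodule.Quotient.mk (p := Nsub) ⟨xv, hxv⟩) ∈ V
  induction hxv using Submodule.span_induction with
  | mem v hv =>
    obtain ⟨lam, rfl⟩ := hv
    have heq : (Submodule.Quotient.mk (p := Nsub)
        ⟨mPS lam, Submodule.subset_span (Set.mem_range_self lam)⟩ : SymQuot k) =
        mQuot k lam := rfl
    by_cases hb : kBddP k lam
    · exact Submodule.subset_span ⟨⟨lam, hb⟩, rfl⟩
    · have hz : (Submodule.Quotient.mk (p := Nsub)
          ⟨mPS lam, Submodule.subset_span (Set.mem_range_self lam)⟩ : SymQuot k) = 0 := by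
        rw [Submodule.Quotient.mk_eq_zero]
        show mPS lam ∈ badP k
        exact Submodule.subset_span ⟨lam, hb, rfl⟩
      rw [hz]
      exact Submodule.zero_mem _
  | zero =>
    have : (Submodule.Quotient.mk (p := Nsub) ⟨0, Submodule.zero_mem _⟩ : SymQuot k) = 0 :=
      rfl
    rw [this]
    exact Submodule.zero_mem _
  | add a b ha hb pa pb =>
    have : (Submodule.Quotient.mk (p := Nsub) (⟨a + b, Submodule.add_mem _ ha hb⟩ : SymPSSub)
        : SymQuot k) =
        Submodule.Quotient.mk ⟨a, ha⟩ + Submodule.Quotient.mk ⟨b, hb⟩ := rfl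
    rw [this]
    exact Submodule.add_mem _ pa pb
  | smul c a ha pa =>
    have : (Submodule.Quotient.mk (p := Nsub) (⟨c • a, Submodule.smul_mem _ c ha⟩ : SymPSSub)
        : SymQuot k) = c • Submodule.Quotient.mk ⟨a, ha⟩ := rfl
    rw [this]
    exact Submodule.smul_mem _ c pa


/-- Fix `k ≥ 1`.  The span of `{m_λ : λ has a part > k}` is an ideal of
the algebra of symmetric power series (the span of all `m_λ`, which is closed under
multiplication); consequently the quotient `Sym^(k)` is a ℚ-algebra and the images of the
`k`-bounded monomial symmetric functions form a ℚ-basis of `Sym^(k)`. -/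
theorem symQuot_ideal_and_basis (k : ℕ) (hk : 1 ≤ k) :
    (∀ f ∈ SymPSSub, ∀ g ∈ SymPSSub, f * g ∈ SymPSSub) ∧
      badP k ≤ SymPSSub ∧
      (∀ f ∈ SymPSSub, ∀ g ∈ badP k, f * g ∈ badP k) ∧
      (LinearIndependent ℚ fun lam : {lam : Ptn // kBddP k lam} => mQuot k lam.1) ∧
      Submodule.span ℚ
          (Set.range fun lam : {lam : Ptn // kBddP k lam} => mQuot k lam.1) = ⊤ := by
  refine ⟨?_, badP_le_SymPSSub k, ?_, main_li k, main_span k⟩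
  · intro f hf g hg
    exact mem_SymPSSub_of_isSym ((isSym_of_mem hf).mul (isSym_of_mem hg))
  · intro f hf g hg
    exact mul_bad (isSym_of_mem hf) hg
end
end

section
/- Fix an integer k ≥ 1. The ℚ-linear span of the monomial quasi-symmetric functions M_α over all compositions α having a part greater than k is an ideal of QSym; consequently, QSym^(k) := QSym / span{M_α : α not k-bounded} is a ℚ-algebra and the images of {M_α : α is a k-bounded composition} form a ℚ-basis of QSym^(k). -/
/-- `QSym`: the ℚ-span of the monomial quasi-symmetric functions `M_α`. -/
noncomputable def QSymSub : Submodule ℚ PS := Submodule.span ℚ (Set.range Mqs)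

/-- The ℚ-span of the monomial quasi-symmetric functions `M_α` over all compositions `α`
having a part greater than `k`. -/
noncomputable def badC (k : ℕ) : Submodule ℚ PS :=
  Submodule.span ℚ (Mqs '' {α : List ℕ+ | ¬ kBddC k α})

/-- The quotient `QSym^(k) = QSym / span{M_α : α not k-bounded}`. -/
abbrev QSymQuot (k : ℕ) : Type :=
  QSymSub ⧸ Submodule.comap QSymSub.subtype (badC k)

/-- The image of `M_α` in the quotient `QSym^(k)`. -/
noncomputable def MQuot (k : ℕ) (α : List ℕ+) : QSymQuot k :=
  Submodule.Quotient.mk ⟨Mqs α, Submodule.subset_span (Set.mem_range_self α)⟩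

set_option linter.dupNamespace false
namespace QP

abbrev cL (γ : List ℕ+) : List ℕ := γ.map (fun p => (p:ℕ))

def comp (d : ℕ →₀ ℕ) : List ℕ := (d.support.sort (· ≤ ·)).map d

lemma coeff_Mqs (α : List ℕ+) (d : ℕ →₀ ℕ) :
    Mqs α d = if comp d = cL α then 1 else 0 := rfl

lemma comp_pos (d : ℕ →₀ ℕ) : ∀ x ∈ comp d, x ≠ 0 := by
  intro x hx
  simp only [comp, List.mem_map] at hx
  obtain ⟨i, hi, rfl⟩ := hx
  rw [Finset.mem_sort] at hi
  exact Finsupp.mem_support_iff.mp hi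

noncomputable def Dm (w : List ℕ) : ℕ →₀ ℕ :=
  Finsupp.onFinset (Finset.range w.length) (fun i => w.getD i 0) (by
    intro i hi
    rw [Finset.mem_range]
    by_contra h
    exact hi (List.getD_eq_default _ _ (le_of_not_gt h)))

lemma Dm_support (w : List ℕ) (hw : ∀ x ∈ w, x ≠ 0) :
    (Dm w).support = Finset.range w.length := by
  apply Finset.Subset.antisymm
  · exact Finsupp.support_onFinset_subset
  · intro i hi
    rw [Finset.mem_range] at hi
    rw [Finsupp.mem_support_iff]
    show w.getD i 0 ≠ 0
    rw [List.getD_eq_getElem w 0 hi]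
    exact hw _ (List.getElem_mem hi)

lemma comp_Dm (w : List ℕ) (hw : ∀ x ∈ w, x ≠ 0) : comp (Dm w) = w := by
  unfold comp
  rw [Dm_support w hw, Finset.sort_range]
  apply List.ext_getElem
  · simp
  · intro i h1 h2
    simp only [List.getElem_map, List.getElem_range]
    show w.getD i 0 = _
    rw [List.getD_eq_getElem w 0 (by simpa using h2)]

def SplitsT (a b w : List ℕ) : Type :=
  {p : List ℕ × List ℕ // p.1.length = w.length ∧ p.2.length = w.length ∧
      List.zipWith (· + ·) p.1 p.2 = w ∧
      p.1.filter (· ≠ 0) = a ∧ p.2.filter (· ≠ 0) = b}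

noncomputable def cnt (a b w : List ℕ) : ℕ := Nat.card (SplitsT a b w)

lemma sum_filter_ne_zero (l : List ℕ) : (l.filter (· ≠ 0)).sum = l.sum := by
  induction l with
  | nil => rfl
  | cons x xs ih =>
    by_cases hx : x = 0
    · subst hx; simpa using ih
    · rw [List.filter_cons]
      simp only [hx, ne_eq, not_false_eq_true, decide_true, if_true, List.sum_cons]
      exact congrArg (x + ·) ih

lemma sum_zipWith_add (u v : List ℕ) (h : u.length = v.length) :
    (List.zipWith (· + ·) u v).sum = u.sum + v.sum := by
  induction u generalizing v with
  | nil =>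
    cases v with
    | nil => simp
    | cons y ys => simp at h
  | cons x xs ih =>
    cases v with
    | nil => simp at h
    | cons y ys =>
      simp only [List.zipWith_cons_cons, List.sum_cons, ih ys (by simpa using h)]
      ring

lemma cnt_sum {a b w : List ℕ} (h : cnt a b w ≠ 0) : w.sum = a.sum + b.sum := by
  have : Nonempty (SplitsT a b w) := (Nat.card_ne_zero.mp h).1
  obtain ⟨⟨⟨u, v⟩, h1, h2, h3, h4, h5⟩⟩ := this
  rw [← h3, sum_zipWith_add u v (h1.trans h2.symm), ← h4, ← h5,
    sum_filter_ne_zero, sum_filter_ne_zero]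

lemma cnt_big {a b w : List ℕ} (h : cnt a b w ≠ 0) : ∀ x ∈ b, ∃ y ∈ w, x ≤ y := by
  have : Nonempty (SplitsT a b w) := (Nat.card_ne_zero.mp h).1
  obtain ⟨⟨⟨u, v⟩, h1, h2, h3, h4, h5⟩⟩ := this
  dsimp only at h1 h2 h3 h4 h5
  subst h3
  intro x hx
  rw [← h5] at hx
  have hxv : x ∈ v := List.mem_of_mem_filter hx
  obtain ⟨i, hi, hg⟩ := List.getElem_of_mem hxv
  have hiw : i < (List.zipWith (· + ·) u v).length := by
    rw [List.length_zipWith]; omega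
  have hw : (List.zipWith (· + ·) u v)[i]'hiw = u[i]'(by omega) + v[i]'hi :=
    List.getElem_zipWith
  exact ⟨_, List.getElem_mem hiw, by omega⟩


lemma support_sub {d1 d2 : ℕ →₀ ℕ} : d1.support ⊆ (d1 + d2).support := by
  intro i hi
  simp only [Finsupp.mem_support_iff, Finsupp.add_apply] at *
  omega

lemma support_sub' {d1 d2 : ℕ →₀ ℕ} : d2.support ⊆ (d1 + d2).support := by
  intro i hi
  simp only [Finsupp.mem_support_iff, Finsupp.add_apply] at *
  omega

lemma filter_map_comp {d d1 : ℕ →₀ ℕ} (hsub : d1.support ⊆ d.support) :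
    ((d.support.sort (· ≤ ·)).map d1).filter (· ≠ 0) = comp d1 := by
  rw [List.filter_map]
  unfold comp
  congr 1
  refine List.Perm.eq_of_pairwise' ((Finset.pairwise_sort _ _).filter _)
    (Finset.pairwise_sort _ _) ?_
  · apply List.perm_of_nodup_nodup_toFinset_eq
    · exact (Finset.sort_nodup _ _).filter _
    · exact Finset.sort_nodup _ _
    · ext i
      simp only [List.toFinset_filter, List.mem_filter, List.mem_toFinset, Finset.mem_filter,
        Finset.mem_sort, Function.comp_apply, ne_eq, decide_not, Bool.not_eq_true',
        decide_eq_false_iff_not, Finsupp.mem_support_iff]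
      constructor
      · rintro ⟨_, h⟩; exact h
      · intro h; exact ⟨by simpa using hsub (Finsupp.mem_support_iff.mpr h), h⟩

lemma comp_length (d : ℕ →₀ ℕ) : (comp d).length = (d.support.sort (· ≤ ·)).length := by
  simp [comp]

lemma cnt_comp (a b : List ℕ) (d : ℕ →₀ ℕ) :
    cnt a b (comp d) =
      ((Finset.HasAntidiagonal.antidiagonal d).filter
        (fun p => comp p.1 = a ∧ comp p.2 = b)).card := by
  classical
  set l := d.support.sort (· ≤ ·) with hl
  have hnd : l.Nodup := Finset.sort_nodup _ _
  have hmeml : ∀ i, i ∈ l ↔ i ∈ d.support := fun i => Finset.mem_sort _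
  have hcomp : comp d = l.map d := rfl
  have map_back : ∀ (u : List ℕ), u.length = l.length →
      l.map (fun i => u.getD (l.idxOf i) 0) = u := by
    intro u hu
    apply List.ext_getElem (by simp [hu])
    intro j hj1 hj2
    simp only [List.getElem_map]
    rw [List.Nodup.idxOf_getElem hnd j (by simpa using hj1), List.getD_eq_getElem _ _ hj2]
  have ext_of_map : ∀ x y : ℕ →₀ ℕ, x.support ⊆ d.support → y.support ⊆ d.support →
      l.map x = l.map y → x = y := by
    intro x y hx hy hmap
    ext i
    by_cases hi : i ∈ d.support
    · exact List.map_inj_left.mp hmap i ((hmeml i).mpr hi)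
    · rw [Finsupp.notMem_support_iff.mp (fun h => hi (hx h)),
        Finsupp.notMem_support_iff.mp (fun h => hi (hy h))]
  let T := (Finset.HasAntidiagonal.antidiagonal d).filter (fun p => comp p.1 = a ∧ comp p.2 = b)
  have hsubs : ∀ q : {p // p ∈ T}, q.1.1.support ⊆ d.support ∧ q.1.2.support ⊆ d.support := by
    intro q
    have hq : q.1.1 + q.1.2 = d :=
      Finset.HasAntidiagonal.mem_antidiagonal.mp (Finset.mem_filter.mp q.2).1
    exact ⟨hq ▸ support_sub, hq ▸ support_sub'⟩
  let F : {p // p ∈ T} → SplitsT a b (comp d) := fun q =>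
    ⟨(l.map q.1.1, l.map q.1.2), by
      have hq : q.1.1 + q.1.2 = d :=
        Finset.HasAntidiagonal.mem_antidiagonal.mp (Finset.mem_filter.mp q.2).1
      have hc := (Finset.mem_filter.mp q.2).2
      refine ⟨by rw [hcomp]; simp, by rw [hcomp]; simp, ?_, ?_, ?_⟩
      · rw [List.zipWith_map, List.zipWith_self, hcomp]
        apply List.map_congr_left
        intro i _
        rw [← hq, Finsupp.add_apply]
      · rw [filter_map_comp (hsubs q).1]; exact hc.1
      · rw [filter_map_comp (hsubs q).2]; exact hc.2⟩
  have hinj : Function.Injective F := by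
    intro q r h
    have h' := congrArg (fun s => s.1) h
    simp only [F, Prod.mk.injEq] at h'
    apply Subtype.ext
    exact Prod.ext (ext_of_map _ _ (hsubs q).1 (hsubs r).1 h'.1)
      (ext_of_map _ _ (hsubs q).2 (hsubs r).2 h'.2)
  have hsurj : Function.Surjective F := by
    rintro ⟨⟨u, v⟩, h1, h2, h3, h4, h5⟩
    dsimp only at h1 h2 h3 h4 h5
    have hul : u.length = l.length := by rw [h1, comp_length]
    have hvl : v.length = l.length := by rw [h2, comp_length]
    have hdef : ∀ (u : List ℕ), u.length = l.length → ∀ i ∉ d.support,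
        u.getD (l.idxOf i) 0 = 0 := by
      intro u hu i hi
      have : i ∉ l := fun h => hi ((hmeml i).mp h)
      rw [List.idxOf_eq_length this]
      exact List.getD_eq_default _ _ hu.le
    let d1 : ℕ →₀ ℕ := Finsupp.onFinset d.support (fun i => u.getD (l.idxOf i) 0)
      (fun i h => by by_contra hi; exact h (hdef u hul i hi))
    let d2 : ℕ →₀ ℕ := Finsupp.onFinset d.support (fun i => v.getD (l.idxOf i) 0)
      (fun i h => by by_contra hi; exact h (hdef v hvl i hi))
    have hd1 : l.map d1 = u := by
      rw [show (⇑d1) = (fun i => u.getD (l.idxOf i) 0) from rfl]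
      exact map_back u hul
    have hd2 : l.map d2 = v := by
      rw [show (⇑d2) = (fun i => v.getD (l.idxOf i) 0) from rfl]
      exact map_back v hvl
    have hadd : d1 + d2 = d := by
      ext i
      rw [Finsupp.add_apply]
      by_cases hi : i ∈ d.support
      · have hil : i ∈ l := (hmeml i).mpr hi
        have hj : l.idxOf i < l.length := List.idxOf_lt_length_iff.mpr hil
        have hju : l.idxOf i < u.length := by omega
        have hjv : l.idxOf i < v.length := by omega
        have hd1i : d1 i = u[l.idxOf i]'hju := List.getD_eq_getElem _ _ hju
        have hd2i : d2 i = v[l.idxOf i]'hjv := List.getD_eq_getElem _ _ hjv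
        rw [hd1i, hd2i]
        have hz : (List.zipWith (· + ·) u v)[l.idxOf i]'(by
            rw [List.length_zipWith]; omega) = u[l.idxOf i]'hju + v[l.idxOf i]'hjv :=
          List.getElem_zipWith
        rw [← hz]
        have := List.getElem_of_eq h3 (i := l.idxOf i) (by rw [List.length_zipWith]; omega)
        rw [this]
        show (l.map d)[l.idxOf i]'(by simpa [comp] using hj) = d i
        rw [List.getElem_map, List.getElem_idxOf hj]
      · have : d i = 0 := Finsupp.notMem_support_iff.mp hi
        rw [this]
        have e1 : d1 i = 0 := hdef u hul i hi
        have e2 : d2 i = 0 := hdef v hvl i hi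
        omega
    have hmem : (d1, d2) ∈ T := by
      rw [Finset.mem_filter]
      refine ⟨Finset.HasAntidiagonal.mem_antidiagonal.mpr hadd, ?_, ?_⟩
      · show comp d1 = a
        rw [← filter_map_comp (d := d) Finsupp.support_onFinset_subset, ← hl, hd1]
        exact h4
      · show comp d2 = b
        rw [← filter_map_comp (d := d) Finsupp.support_onFinset_subset, ← hl, hd2]
        exact h5
    refine ⟨⟨(d1, d2), hmem⟩, ?_⟩
    apply Subtype.ext
    exact Prod.ext hd1 hd2
  rw [← Nat.card_eq_finsetCard]
  exact Nat.card_congr (Equiv.ofBijective F ⟨hinj, hsurj⟩).symm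



lemma coeList (l : List ℕ+) : l.map (fun p => (p : ℕ)) = List.map PNat.val l := by
  show List.map (fun p : ℕ => p) (Bind.bind l (fun a => Pure.pure (PNat.val a))) = _
  rw [show (Bind.bind l (fun a => Pure.pure (PNat.val a)) : List ℕ)
      = l.flatMap (fun a => [PNat.val a]) from rfl]
  rw [List.map_id']
  induction l with
  | nil => rfl
  | cons x xs ih => rw [List.flatMap_cons, List.map_cons, ih]; rfl

lemma cL_eq (l : List ℕ+) : cL l = List.map PNat.val l := coeList l

lemma cL_inj : Function.Injective cL := by
  intro x y h
  rw [cL_eq, cL_eq] at h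
  exact List.map_injective_iff.mpr (fun p q hpq => PNat.coe_injective hpq) h

lemma psum_eq (l : List ℕ+) : psum l = (cL l).sum := rfl

lemma finite_psum (n : ℕ) : Finite {γ : List ℕ+ // psum γ = n} := by
  apply Finite.of_injective (fun γ => (⟨cL γ.1, by
      intro i hi
      rw [cL_eq] at hi
      obtain ⟨p, -, rfl⟩ := List.mem_map.mp hi
      exact p.property, by rw [← psum_eq]; exact γ.2⟩ : Composition n))
  intro γ1 γ2 h
  apply Subtype.ext
  apply cL_inj
  exact congrArg Composition.blocks h

lemma finite_cnt (a b : List ℕ) :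
    {γ : List ℕ+ | cnt a b (cL γ) ≠ 0}.Finite := by
  have hsub : {γ : List ℕ+ | cnt a b (cL γ) ≠ 0}
      ⊆ {γ : List ℕ+ | psum γ = a.sum + b.sum} := by
    intro γ hγ
    rw [Set.mem_setOf_eq, psum_eq]
    exact cnt_sum hγ
  apply Set.Finite.subset _ hsub
  rw [← Set.finite_coe_iff]
  exact finite_psum _



lemma Mqs_mul_eq (α β : List ℕ+) :
    ∃ Γ : Finset (List ℕ+), (∀ γ ∈ Γ, cnt (cL α) (cL β) (cL γ) ≠ 0) ∧
      Mqs α * Mqs β = ∑ γ ∈ Γ, ((cnt (cL α) (cL β) (cL γ) : ℕ) : ℚ) • Mqs γ := by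
  classical
  refine ⟨(finite_cnt (cL α) (cL β)).toFinset, fun γ hγ => by
    simpa using (Set.Finite.mem_toFinset _).mp hγ, ?_⟩
  apply MvPowerSeries.ext
  intro d
  rw [MvPowerSeries.coeff_mul]
  have hL : ∑ p ∈ Finset.HasAntidiagonal.antidiagonal d,
      MvPowerSeries.coeff p.1 (Mqs α) * MvPowerSeries.coeff p.2 (Mqs β)
      = ((cnt (cL α) (cL β) (comp d) : ℕ) : ℚ) := by
    have hc : ∀ p ∈ Finset.HasAntidiagonal.antidiagonal d,
        MvPowerSeries.coeff p.1 (Mqs α) * MvPowerSeries.coeff p.2 (Mqs β)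
        = if comp p.1 = cL α ∧ comp p.2 = cL β then (1 : ℚ) else 0 := by
      intro p _
      rw [MvPowerSeries.coeff_apply, MvPowerSeries.coeff_apply, coeff_Mqs, coeff_Mqs]
      by_cases h1 : comp p.1 = cL α <;> by_cases h2 : comp p.2 = cL β <;>
        simp [h1, h2]
    rw [Finset.sum_congr rfl hc, Finset.sum_boole, cnt_comp]
  rw [hL, map_sum]
  set γ0 : List ℕ+ := (comp d).pmap (fun x hx => (⟨x, Nat.pos_of_ne_zero hx⟩ : ℕ+))
    (comp_pos d) with hγ0def
  have hγ0 : cL γ0 = comp d := by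
    rw [cL_eq, hγ0def]
    have hpm : ∀ (w : List ℕ) (H : ∀ x ∈ w, x ≠ 0), List.map PNat.val
        (w.pmap (fun x hx => (⟨x, Nat.pos_of_ne_zero hx⟩ : ℕ+)) H) = w := by
      intro w H
      induction w with
      | nil => rfl
      | cons x xs ih => exact congrArg (x :: ·) (ih _)
    exact hpm _ _
  have hcond : ∀ γ : List ℕ+, (comp d = cL γ) ↔ γ0 = γ := by
    intro γ
    constructor
    · intro h; exact cL_inj (hγ0.trans h)
    · rintro rfl; exact hγ0.symm
  have hterm : ∀ γ ∈ (finite_cnt (cL α) (cL β)).toFinset,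
      (MvPowerSeries.coeff d) (((cnt (cL α) (cL β) (cL γ) : ℕ) : ℚ) • Mqs γ)
      = if γ0 = γ then ((cnt (cL α) (cL β) (cL γ) : ℕ) : ℚ) else 0 := by
    intro γ _
    rw [map_smul, smul_eq_mul, MvPowerSeries.coeff_apply, coeff_Mqs]
    by_cases h : γ0 = γ
    · have h' : comp d = cL γ := (hcond γ).mpr h
      simp [h, h']
    · have h' : ¬ comp d = cL γ := fun hc => h ((hcond γ).mp hc)
      simp [h, h']
  rw [Finset.sum_congr rfl hterm, Finset.sum_ite_eq]
  by_cases hmem : γ0 ∈ (finite_cnt (cL α) (cL β)).toFinset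
  · rw [if_pos hmem, hγ0]
  · rw [if_neg hmem]
    have : cnt (cL α) (cL β) (cL γ0) = 0 := by
      by_contra h
      exact hmem ((Set.Finite.mem_toFinset _).mpr h)
    rw [← hγ0, this]
    simp

lemma Mqs_mul_mem (α β : List ℕ+) (S : Set (List ℕ+))
    (hS : ∀ γ, cnt (cL α) (cL β) (cL γ) ≠ 0 → γ ∈ S) :
    Mqs α * Mqs β ∈ Submodule.span ℚ (Mqs '' S) := by
  obtain ⟨Γ, hΓ, heq⟩ := Mqs_mul_eq α β
  rw [heq]
  exact Submodule.sum_mem _ (fun γ hγ => Submodule.smul_mem _ _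
    (Submodule.subset_span ⟨γ, hS γ (hΓ γ hγ), rfl⟩))


end QP

namespace QP

lemma comp_Dm_cL (α : List ℕ+) : comp (Dm (cL α)) = cL α := by
  apply comp_Dm
  intro x hx
  rw [cL_eq] at hx
  obtain ⟨p, -, rfl⟩ := List.mem_map.mp hx
  exact p.property.ne'

lemma Mqs_li : LinearIndependent ℚ Mqs := by
  rw [linearIndependent_iff']
  intro s g hsum γ0 hγ0
  have h := congrArg (fun f => MvPowerSeries.coeff (Dm (cL γ0)) f) hsum
  simp only [map_zero] at h
  rw [map_sum] at h
  have hterm : ∀ γ ∈ s, (MvPowerSeries.coeff (Dm (cL γ0))) (g γ • Mqs γ)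
      = if γ0 = γ then g γ else 0 := by
    intro γ _
    rw [map_smul, smul_eq_mul, MvPowerSeries.coeff_apply, coeff_Mqs, comp_Dm_cL]
    by_cases hc : γ0 = γ
    · subst hc; simp
    · have : cL γ0 ≠ cL γ := fun hcl => hc (cL_inj hcl)
      simp [this, hc]
  rw [Finset.sum_congr rfl hterm, Finset.sum_ite_eq, if_pos hγ0] at h
  exact h

end QP

/-- Fix `k ≥ 1`.  The span of `{M_α : α has a part > k}` is an ideal of
`QSym` (the span of all `M_α`, which is closed under multiplication); consequently
`QSym^(k)` is a ℚ-algebra and the images of the `k`-bounded monomial quasi-symmetric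
functions form a ℚ-basis of `QSym^(k)`. -/
theorem qsymQuot_ideal_and_basis (k : ℕ) (hk : 1 ≤ k) :
    (∀ f ∈ QSymSub, ∀ g ∈ QSymSub, f * g ∈ QSymSub) ∧
      badC k ≤ QSymSub ∧
      (∀ f ∈ QSymSub, ∀ g ∈ badC k, f * g ∈ badC k) ∧
      (LinearIndependent ℚ fun α : {α : List ℕ+ // kBddC k α} => MQuot k α.1) ∧
      Submodule.span ℚ
          (Set.range fun α : {α : List ℕ+ // kBddC k α} => MQuot k α.1) = ⊤ := by
  classical
  have hQ : QSymSub = Submodule.span ℚ (Set.range Mqs) := rfl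
  -- Part 1: closure under multiplication
  have part1 : ∀ f ∈ QSymSub, ∀ g ∈ QSymSub, f * g ∈ QSymSub := by
    intro f hf
    rw [hQ] at hf
    induction hf using Submodule.span_induction with
    | mem x hx =>
      obtain ⟨α, rfl⟩ := hx
      intro g hg
      rw [hQ] at hg
      induction hg using Submodule.span_induction with
      | mem y hy =>
        obtain ⟨β, rfl⟩ := hy
        have := QP.Mqs_mul_mem α β Set.univ (fun γ _ => trivial)
        rwa [Set.image_univ] at this
      | zero => rw [mul_zero]; exact Submodule.zero_mem _
      | add y z _ _ hy hz => rw [mul_add]; exact Submodule.add_mem _ hy hz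
      | smul c y _ hy => rw [mul_smul_comm]; exact Submodule.smul_mem _ _ hy
    | zero => intro g _; rw [zero_mul]; exact Submodule.zero_mem _
    | add x y _ _ hx hy =>
      intro g hg; rw [add_mul]; exact Submodule.add_mem _ (hx g hg) (hy g hg)
    | smul c x _ hx =>
      intro g hg; rw [smul_mul_assoc]; exact Submodule.smul_mem _ _ (hx g hg)
  -- Part 2
  have part2 : badC k ≤ QSymSub := Submodule.span_mono (Set.image_subset_range _ _)
  -- Part 3: ideal property
  have key3 : ∀ (α β : List ℕ+), ¬ kBddC k β →
      Mqs α * Mqs β ∈ badC k := by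
    intro α β hβ
    apply QP.Mqs_mul_mem α β {γ : List ℕ+ | ¬ kBddC k γ}
    intro γ hγ hbdd
    apply hβ
    intro p hp
    by_contra hpk
    have hx : (p : ℕ) ∈ QP.cL β := by
      rw [QP.cL_eq]; exact List.mem_map_of_mem hp
    obtain ⟨y, hy, hle⟩ := QP.cnt_big hγ _ hx
    rw [QP.cL_eq] at hy
    obtain ⟨q, hq, rfl⟩ := List.mem_map.mp hy
    exact hpk (le_trans hle (hbdd q hq))
  have part3 : ∀ f ∈ QSymSub, ∀ g ∈ badC k, f * g ∈ badC k := by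
    intro f hf
    rw [hQ] at hf
    induction hf using Submodule.span_induction with
    | mem x hx =>
      obtain ⟨α, rfl⟩ := hx
      intro g hg
      induction hg using Submodule.span_induction with
      | mem y hy =>
        obtain ⟨β, hβ, rfl⟩ := hy
        exact key3 α β hβ
      | zero => rw [mul_zero]; exact Submodule.zero_mem _
      | add y z _ _ hy hz => rw [mul_add]; exact Submodule.add_mem _ hy hz
      | smul c y _ hy => rw [mul_smul_comm]; exact Submodule.smul_mem _ _ hy
    | zero => intro g _; rw [zero_mul]; exact Submodule.zero_mem _
    | add x y _ _ hx hy =>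
      intro g hg; rw [add_mul]; exact Submodule.add_mem _ (hx g hg) (hy g hg)
    | smul c x _ hx =>
      intro g hg; rw [smul_mul_assoc]; exact Submodule.smul_mem _ _ (hx g hg)
  set W := Submodule.comap QSymSub.subtype (badC k) with hW
  have he : ∀ α : List ℕ+, MQuot k α = W.mkQ
      ⟨Mqs α, Submodule.subset_span (Set.mem_range_self α)⟩ := fun α => rfl
  -- Part 4: linear independence
  have part4 : LinearIndependent ℚ fun α : {α : List ℕ+ // kBddC k α} => MQuot k α.1 := by
    rw [linearIndependent_iff']
    intro s g hsum i0 hi0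
    have hmk : W.mkQ (∑ i ∈ s, g i •
        (⟨Mqs i.1, Submodule.subset_span (Set.mem_range_self i.1)⟩ : QSymSub)) = 0 := by
      rw [map_sum]
      simp only [map_smul]
      rw [← hsum]
      apply Finset.sum_congr rfl
      intro i _
      rw [he i.1]
    rw [Submodule.mkQ_apply, Submodule.Quotient.mk_eq_zero, hW, Submodule.mem_comap,
      map_sum] at hmk
    simp only [map_smul, Submodule.subtype_apply] at hmk
    obtain ⟨l, hl, hlc⟩ := (Finsupp.mem_span_image_iff_linearCombination ℚ).mp hmk
    set g' : (List ℕ+) →₀ ℚ := ∑ i ∈ s, Finsupp.single i.1 (g i) with hg'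
    have hcomb : Finsupp.linearCombination ℚ Mqs g' = Finsupp.linearCombination ℚ Mqs l := by
      rw [hlc, hg', map_sum]
      apply Finset.sum_congr rfl
      intro i _
      rw [Finsupp.linearCombination_single]
    have hgl : g' = l := by
      have h0 : Finsupp.linearCombination ℚ Mqs (g' - l) = 0 := by
        rw [map_sub, hcomb, sub_self]
      have := linearIndependent_iff.mp QP.Mqs_li _ h0
      exact sub_eq_zero.mp (by rwa [← sub_eq_zero] at this ⊢)
    have hg'i0 : g' i0.1 = g i0 := by
      rw [hg', Finsupp.finset_sum_apply]
      rw [Finset.sum_eq_single_of_mem i0 hi0]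
      · rw [Finsupp.single_eq_same]
      · intro j _ hj
        apply Finsupp.single_eq_of_ne
        exact fun hj1 => hj (Subtype.ext hj1.symm)
    have hli0 : l i0.1 = 0 := by
      by_contra hne
      have : i0.1 ∈ l.support := Finsupp.mem_support_iff.mpr hne
      exact (Finsupp.mem_supported ℚ l).mp hl this i0.2
    rw [← hg'i0, hgl, hli0]
  -- Part 5: spanning
  have part5 : Submodule.span ℚ
      (Set.range fun α : {α : List ℕ+ // kBddC k α} => MQuot k α.1) = ⊤ := by
    have e : List ℕ+ → QSymSub :=
      fun α => ⟨Mqs α, Submodule.subset_span (Set.mem_range_self α)⟩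
    have h1 : Submodule.span ℚ (Set.range fun α : List ℕ+ =>
        (⟨Mqs α, Submodule.subset_span (Set.mem_range_self α)⟩ : QSymSub)) = ⊤ := by
      apply Submodule.map_injective_of_injective (Submodule.injective_subtype QSymSub)
      rw [Submodule.map_span, Submodule.map_top, Submodule.range_subtype]
      rw [← Set.range_comp]
      exact hQ.symm
    have h2 : Submodule.span ℚ (Set.range fun α : List ℕ+ => MQuot k α) = ⊤ := by
      have : (Set.range fun α : List ℕ+ => MQuot k α) =
          W.mkQ '' (Set.range fun α : List ℕ+ =>
            (⟨Mqs α, Submodule.subset_span (Set.mem_range_self α)⟩ : QSymSub)) := by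
        rw [← Set.range_comp]
        rfl
      rw [this, Submodule.span_image, h1, Submodule.map_top, Submodule.range_mkQ]
    apply le_antisymm le_top
    rw [← h2]
    apply Submodule.span_le.mpr
    rintro x ⟨α, rfl⟩
    by_cases hα : kBddC k α
    · exact Submodule.subset_span ⟨⟨α, hα⟩, rfl⟩
    · have hzero : MQuot k α = 0 := by
        rw [he α, Submodule.mkQ_apply, Submodule.Quotient.mk_eq_zero, hW,
          Submodule.mem_comap]
        exact Submodule.subset_span ⟨α, hα, rfl⟩
      show MQuot k α ∈ _
      rw [hzero]
      exact Submodule.zero_mem _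
  exact ⟨part1, part2, part3, part4, part5⟩
end
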